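/- arXiv:2307.11347 — 9 statements merged into one kernel-verified Lean document; each statement's English description precedes it below -/
import Mathlib

section
/- Let C be an ICE-closed subcategory of an abelian category A, and define αC = {A ∈ C | for every morphism f : C' → A with C' ∈ C, the kernel of f belongs to C}. Then: (1) if C ∈ αC and X is a subobject of C belonging to C, then X belongs to αC; and (2) αC is a wide subcategory of A. -/
open CategoryTheory Limits ZeroObject

namespace ICEPaper

variable {A : Type*} [Category A] [Abelian A]

/-- A full additive subcategory (given by its class of objects), closed under isomorphisms. -/
structure IsSubcat (C : Set A) : Prop where
  mem_of_iso : ∀ ⦃X Y : A⦄, (X ≅ Y) → X ∈ C → Y ∈ C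
  zero_mem : (0 : A) ∈ C
  biprod_mem : ∀ ⦃X Y : A⦄, X ∈ C → Y ∈ C → (X ⊞ Y) ∈ C

/-- `C` is closed under extensions. -/
def ClosedUnderExtensions (C : Set A) : Prop :=
  ∀ (S : ShortComplex A), S.ShortExact → S.X₁ ∈ C → S.X₃ ∈ C → S.X₂ ∈ C

/-- `C` is closed under quotients in `A`. -/
def ClosedUnderQuotients (C : Set A) : Prop :=
  ∀ ⦃X Y : A⦄ (f : X ⟶ Y), Epi f → X ∈ C → Y ∈ C

/-- `C` is closed under images. -/
def ClosedUnderImages (C : Set A) : Prop :=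
  ∀ ⦃X Y : A⦄ (f : X ⟶ Y), X ∈ C → Y ∈ C → image f ∈ C

/-- `C` is closed under cokernels. -/
def ClosedUnderCokernels (C : Set A) : Prop :=
  ∀ ⦃X Y : A⦄ (f : X ⟶ Y), X ∈ C → Y ∈ C → cokernel f ∈ C

/-- `C` is closed under kernels. -/
def ClosedUnderKernels (C : Set A) : Prop :=
  ∀ ⦃X Y : A⦄ (f : X ⟶ Y), X ∈ C → Y ∈ C → kernel f ∈ C

/-- `C` is a torsion class in `A`. -/
structure IsTorsionClass (C : Set A) : Prop where
  subcat : IsSubcat C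
  ext : ClosedUnderExtensions C
  quot : ClosedUnderQuotients C

/-- `C` is a wide subcategory of `A`. -/
structure IsWide (C : Set A) : Prop where
  subcat : IsSubcat C
  ext : ClosedUnderExtensions C
  ker : ClosedUnderKernels C
  coker : ClosedUnderCokernels C

/-- `C` is an ICE-closed subcategory of `A`. -/
structure IsICEClosed (C : Set A) : Prop where
  subcat : IsSubcat C
  im : ClosedUnderImages C
  coker : ClosedUnderCokernels C
  ext : ClosedUnderExtensions C

/-- `αC = {X ∈ C ∣ every morphism f : C' ⟶ X with C' ∈ C has ker f ∈ C}`. -/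
def alphaSub (C : Set A) : Set A :=
  {X | X ∈ C ∧ ∀ ⦃C' : A⦄ (f : C' ⟶ X), C' ∈ C → kernel f ∈ C}

/-- `D` is a torsion class in the full (wide, hence abelian) subcategory `W` of `A`:
`D ⊆ W`, and `D` is closed under extensions and quotients inside `W`.
(Here short exact sequences and epimorphisms in the wide subcategory `W` are
exactly those of `A` with terms in `W`.) -/
structure IsTorsionClassIn (W D : Set A) : Prop where
  subset : D ⊆ W
  subcat : IsSubcat D
  ext : ∀ (S : ShortComplex A), S.ShortExact → S.X₁ ∈ D → S.X₃ ∈ D → S.X₂ ∈ D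
  quot : ∀ ⦃X Y : A⦄ (f : X ⟶ Y), Epi f → X ∈ D → Y ∈ W → Y ∈ D

/-- The exactness condition defining narrow sequences: for every exact sequence
`A → B → C → D → E` with `A ∈ C(k−1)`, `B, D ∈ C(k)` and `E ∈ C(k+1)` one has `C ∈ C(k)`. -/
def NarrowCondition (C : ℤ → Set A) : Prop :=
  ∀ (k : ℤ) (S : ComposableArrows A 4), S.Exact →
    S.obj' 0 ∈ C (k - 1) → S.obj' 1 ∈ C k → S.obj' 3 ∈ C k → S.obj' 4 ∈ C (k + 1) →
    S.obj' 2 ∈ C k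

/-- A narrow sequence in `A`. -/
structure IsNarrowSequence (C : ℤ → Set A) : Prop where
  subcat : ∀ k, IsSubcat (C k)
  decreasing : ∀ k, C (k + 1) ⊆ C k
  narrow : NarrowCondition C

/-- An ICE sequence in `A`. -/
structure IsICESequence (C : ℤ → Set A) : Prop where
  ice : ∀ k, IsICEClosed (C k)
  tors : ∀ k, IsTorsionClassIn (alphaSub (C k)) (C (k + 1))

/-- The zero subcategory. -/
def zeroSubcat : Set A := {X | IsZero X}



noncomputable def kerRestrictIso {C' B D : A} (f : C' ⟶ B) (p : B ⟶ D) :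
    kernel (kernel.ι (f ≫ p) ≫ f) ≅ kernel f where
  hom := kernel.lift f (kernel.ι _ ≫ kernel.ι (f ≫ p)) (by
    rw [Category.assoc]; exact kernel.condition _)
  inv := kernel.lift _ (kernel.lift (f ≫ p) (kernel.ι f)
      (by rw [← Category.assoc, kernel.condition, zero_comp])) (by
    rw [← Category.assoc, kernel.lift_ι, kernel.condition])
  hom_inv_id := by ext; simp
  inv_hom_id := by ext; simp

noncomputable def kerPullbackFstIso {Y Z C' : A} (π : Y ⟶ Z) (g : C' ⟶ Z) :
    kernel (pullback.fst π g) ≅ kernel g where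
  hom := kernel.lift g (kernel.ι _ ≫ pullback.snd π g) (by
    rw [Category.assoc, ← pullback.condition, ← Category.assoc, kernel.condition, zero_comp])
  inv := kernel.lift _ (pullback.lift 0 (kernel.ι g) (by simp)) (pullback.lift_fst _ _ _)
  hom_inv_id := by
    ext
    · simp [pullback.lift_fst _ _ _]
    · simp [pullback.lift_snd _ _ _]
  inv_hom_id := by ext; simp [pullback.lift_snd _ _ _]

noncomputable def kerPullbackSndIso {Y Z C' : A} (π : Y ⟶ Z) (g : C' ⟶ Z) :
    kernel (pullback.snd π g) ≅ kernel π where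
  hom := kernel.lift π (kernel.ι _ ≫ pullback.fst π g) (by
    rw [Category.assoc, pullback.condition, ← Category.assoc, kernel.condition, zero_comp])
  inv := kernel.lift _ (pullback.lift (kernel.ι π) 0 (by simp)) (pullback.lift_snd _ _ _)
  hom_inv_id := by
    ext
    · simp [pullback.lift_fst _ _ _]
    · simp [pullback.lift_snd _ _ _]
  inv_hom_id := by ext; simp [pullback.lift_fst _ _ _]

/-- Key: kernels of maps into the middle of a short exact sequence with ends in `αC`. -/
theorem ker_mem_of_shortExact {C : Set A} (hC : IsICEClosed C)
    (S : ShortComplex A) (hS : S.ShortExact)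
    (h1 : S.X₁ ∈ alphaSub C) (h3 : S.X₃ ∈ alphaSub C)
    {C' : A} (f : C' ⟶ S.X₂) (hC' : C' ∈ C) : kernel f ∈ C := by
  haveI := hS.mono_f
  set k : kernel (f ≫ S.g) ⟶ C' := kernel.ι (f ≫ S.g) with hk
  have hK : kernel (f ≫ S.g) ∈ C := h3.2 (f ≫ S.g) hC'
  have w : (k ≫ f) ≫ S.g = 0 := by rw [Category.assoc]; exact kernel.condition _
  obtain ⟨h, hh⟩ := hS.exact.lift' (k ≫ f) w
  have hker_h : kernel h ∈ C := h1.2 h hK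
  have : kernel (k ≫ f) ∈ C := by
    rw [← hh]
    exact hC.subcat.mem_of_iso (kernelCompMono h S.f).symm hker_h
  exact hC.subcat.mem_of_iso (kerRestrictIso f S.g) this

/-- **Proposition (Ingalls–Thomas, Enomoto).**
Let `C` be an ICE-closed subcategory of an abelian category `A` and
`αC = {X ∈ C ∣ ker f ∈ C for every f : C' ⟶ X with C' ∈ C}`. Then
(1) if `C₀ ∈ αC` and `X` is a subobject of `C₀` belonging to `C`, then `X ∈ αC`;
(2) `αC` is a wide subcategory of `A`. -/
theorem alphaSub_of_ICEClosed {A : Type*} [Category A] [Abelian A]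
    {C : Set A} (hC : IsICEClosed C) :
    (∀ ⦃X C₀ : A⦄ (i : X ⟶ C₀), Mono i → C₀ ∈ alphaSub C → X ∈ C → X ∈ alphaSub C) ∧
      IsWide (alphaSub C) := by
  have part1 : ∀ ⦃X C₀ : A⦄ (i : X ⟶ C₀), Mono i → C₀ ∈ alphaSub C → X ∈ C →
      X ∈ alphaSub C := by
    intro X C₀ i hi hC₀ hX
    refine ⟨hX, fun C' f hC' => ?_⟩
    haveI := hi
    exact hC.subcat.mem_of_iso (kernelCompMono f i) (hC₀.2 (f ≫ i) hC')
  refine ⟨part1, ?_, ?_, ?_, ?_⟩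
  · -- IsSubcat
    refine ⟨?_, ?_, ?_⟩
    · intro X Y e hX
      refine ⟨hC.subcat.mem_of_iso e hX.1, fun C' f hC' => ?_⟩
      exact hC.subcat.mem_of_iso (kernelCompMono f e.inv) (hX.2 (f ≫ e.inv) hC')
    · refine ⟨hC.subcat.zero_mem, fun C' f hC' => ?_⟩
      have hf : f = 0 := (isZero_zero A).eq_of_tgt f 0
      rw [hf]
      exact hC.subcat.mem_of_iso kernelZeroIsoSource.symm hC'
    · intro X Y hX hY
      let S : ShortComplex A := ShortComplex.mk (biprod.inl : X ⟶ X ⊞ Y) biprod.snd (by simp)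
      have hSE : S.ShortExact := by
        have sp : S.Splitting :=
          { r := biprod.fst, s := biprod.inr, f_r := biprod.inl_fst, s_g := biprod.inr_snd, id := biprod.total }
        exact sp.shortExact
      refine ⟨hC.subcat.biprod_mem hX.1 hY.1, fun C' f hC' => ?_⟩
      exact ker_mem_of_shortExact hC S hSE hX hY f hC'
  · -- extensions
    intro S hS h1 h3
    exact ⟨hC.ext S hS h1.1 h3.1, fun C' f hC' => ker_mem_of_shortExact hC S hS h1 h3 f hC'⟩
  · -- kernels
    intro X Y f hX hY
    exact part1 (kernel.ι f) inferInstance hX (hY.2 f hX.1)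
  · -- cokernels
    intro X Y f hX hY
    refine ⟨hC.coker f hX.1 hY.1, fun C' g hC' => ?_⟩
    set π : Y ⟶ cokernel f := cokernel.π f with hπ
    have hkπ : kernel π ∈ C :=
      hC.subcat.mem_of_iso (Abelian.imageIsoImage f).symm (hC.im f hX.1 hY.1)
    set P := pullback π g with hP
    have hPmem : P ∈ C := by
      let S : ShortComplex A := ShortComplex.mk (kernel.ι (pullback.snd π g))
        (pullback.snd π g) (kernel.condition _)
      have hSE : S.ShortExact := by
        refine ⟨ShortComplex.exact_of_f_is_kernel S (kernelIsKernel _)⟩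
      exact hC.ext S hSE (hC.subcat.mem_of_iso (kerPullbackSndIso π g).symm hkπ) hC'
    have : kernel (pullback.fst π g) ∈ C := hY.2 (pullback.fst π g) hPmem
    exact hC.subcat.mem_of_iso (kerPullbackFstIso π g) this


end ICEPaper
end

section
/- Let {C(k)}_{k∈ℤ} be a sequence of subcategories of an abelian category A satisfying C(k+1) ⊆ C(k) for all k ∈ ℤ. Then {C(k)}_{k∈ℤ} is a narrow sequence if and only if: (1) C(k) is closed under extensions in A for every k ∈ ℤ, and (2) for every k ∈ ℤ and every morphism f : A → B with A ∈ C(k) and B ∈ C(k+1), one has ker f ∈ C(k) and coker f ∈ C(k+1). -/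
open CategoryTheory Limits ZeroObject

namespace ICEPaper

variable {A : Type*} [Category A] [Abelian A]

/-- **Proposition (characterization of narrow sequences).**
Let `{C(k)}_{k∈ℤ}` be a sequence of subcategories of an abelian category `A` with
`C(k+1) ⊆ C(k)` for all `k`. Then it is a narrow sequence if and only if
(1) each `C(k)` is closed under extensions, and
(2) for every `k` and every morphism `f : X ⟶ Y` with `X ∈ C(k)` and `Y ∈ C(k+1)`,
one has `ker f ∈ C(k)` and `coker f ∈ C(k+1)`. -/
theorem narrowCondition_iff {A : Type*} [Category A] [Abelian A]
    (C : ℤ → Set A) (hsub : ∀ k, IsSubcat (C k)) (hdec : ∀ k, C (k + 1) ⊆ C k) :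
    NarrowCondition C ↔
      ((∀ k, ClosedUnderExtensions (C k)) ∧
        ∀ (k : ℤ) ⦃X Y : A⦄ (f : X ⟶ Y), X ∈ C k → Y ∈ C (k + 1) →
          kernel f ∈ C k ∧ cokernel f ∈ C (k + 1)) := by
  constructor
  · intro hn
    constructor
    · -- closed under extensions
      intro k S hS h1 h3
      refine hn k (ComposableArrows.mk₄ (0 : (0:A) ⟶ S.X₁) S.f S.g (0 : S.X₃ ⟶ (0:A))) ?_
        ((hsub (k-1)).zero_mem) h1 h3 ((hsub (k+1)).zero_mem)
      have hc : (ComposableArrows.mk₄ (0 : (0:A) ⟶ S.X₁) S.f S.g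
          (0 : S.X₃ ⟶ (0:A))).IsComplex := by
        constructor
        intro i hi
        match i, hi with
        | 0, _ => exact zero_comp
        | 1, _ => exact S.zero
        | 2, _ => exact comp_zero
      refine ⟨hc, fun i hi => ?_⟩
      match i, hi with
      | 0, _ => exact (ShortComplex.exact_iff_mono _ rfl).2 hS.mono_f
      | 1, _ => exact hS.exact
      | 2, _ => exact (ShortComplex.exact_iff_epi _ rfl).2 hS.epi_g
    · -- kernels and cokernels
      intro k X Y f hX hY
      constructor
      · -- kernel
        refine hn k (ComposableArrows.mk₄ (0 : (0:A) ⟶ (0:A)) (0 : (0:A) ⟶ kernel f)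
          (kernel.ι f) f) ?_ ((hsub (k-1)).zero_mem) ((hsub k).zero_mem) hX hY
        have hc : (ComposableArrows.mk₄ (0 : (0:A) ⟶ (0:A)) (0 : (0:A) ⟶ kernel f)
            (kernel.ι f) f).IsComplex := by
          constructor
          intro i hi
          match i, hi with
          | 0, _ => exact zero_comp
          | 1, _ => exact zero_comp
          | 2, _ => exact kernel.condition f
        refine ⟨hc, fun i hi => ?_⟩
        match i, hi with
        | 0, _ => exact ShortComplex.exact_of_isZero_X₂ _ (isZero_zero A)
        | 1, _ => exact (ShortComplex.exact_iff_mono _ rfl).2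
                      (inferInstanceAs (Mono (kernel.ι f)))
        | 2, _ => exact ShortComplex.exact_of_f_is_kernel _ (kernelIsKernel f)
      · -- cokernel
        have := hn (k+1) (ComposableArrows.mk₄ f (cokernel.π f) (0 : cokernel f ⟶ (0:A))
          (0 : (0:A) ⟶ (0:A))) ?_ ?_ hY ((hsub (k+1)).zero_mem) ((hsub (k+1+1)).zero_mem)
        · exact this
        · have hc : (ComposableArrows.mk₄ f (cokernel.π f) (0 : cokernel f ⟶ (0:A))
              (0 : (0:A) ⟶ (0:A))).IsComplex := by
            constructor
            intro i hi
            match i, hi with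
            | 0, _ => exact cokernel.condition f
            | 1, _ => exact comp_zero
            | 2, _ => exact comp_zero
          refine ⟨hc, fun i hi => ?_⟩
          match i, hi with
          | 0, _ => exact ShortComplex.exact_of_g_is_cokernel _ (cokernelIsCokernel f)
          | 1, _ => exact (ShortComplex.exact_iff_epi _ rfl).2
                        (inferInstanceAs (Epi (cokernel.π f)))
          | 2, _ => exact ShortComplex.exact_of_isZero_X₂ _ (isZero_zero A)
        · have hk : k + 1 - 1 = k := by omega
          rw [hk]; exact hX
  · rintro ⟨hext, hkc⟩
    intro k S hS h0 h1 h3 h4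
    -- notation for the four maps
    set f := S.map' 0 1 with hf
    set g := S.map' 1 2 with hg
    set h := S.map' 2 3 with hh
    set i := S.map' 3 4 with hi
    have wfg : f ≫ g = 0 := hS.toIsComplex.zero 0
    have wgh : g ≫ h = 0 := hS.toIsComplex.zero 1
    have whi : h ≫ i = 0 := hS.toIsComplex.zero 2
    -- cokernel f ∈ C k
    have hcok : cokernel f ∈ C k := by
      have := (hkc (k-1) f h0 (by simpa using h1)).2
      simpa using this
    -- kernel i ∈ C k
    have hker : kernel i ∈ C k := (hkc k i h3 h4).1
    -- the induced maps
    let gbar : cokernel f ⟶ S.obj' 2 := cokernel.desc f g wfg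
    let hbar : S.obj' 2 ⟶ kernel i := kernel.lift i h whi
    have hmono : Mono gbar := by
      have := hS.exact 0 (by omega)
      rw [ShortComplex.exact_iff_mono_cokernel_desc] at this
      exact this
    have hepi : Epi hbar := by
      have := hS.exact 2 (by omega)
      rw [ShortComplex.exact_iff_epi_kernel_lift] at this
      exact this
    have wbar : gbar ≫ hbar = 0 := by
      rw [← cancel_mono (kernel.ι i), ← cancel_epi (cokernel.π f)]
      simp [gbar, hbar, wgh]
    -- the short complex cokernel f ⟶ S.obj' 2 ⟶ kernel i is exact
    have hex2 : (ShortComplex.mk g h wgh).Exact := hS.exact 1 (by omega)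
    have wbar2 : gbar ≫ h = 0 := by
      rw [← cancel_epi (cokernel.π f)]; simp [gbar, wgh]
    let φ : ShortComplex.mk g h wgh ⟶ ShortComplex.mk gbar h wbar2 :=
      { τ₁ := cokernel.π f, τ₂ := 𝟙 _, τ₃ := 𝟙 _,
        comm₁₂ := by simp [gbar], comm₂₃ := by simp }
    haveI : Epi φ.τ₁ := inferInstanceAs (Epi (cokernel.π f))
    haveI : IsIso φ.τ₂ := inferInstanceAs (IsIso (𝟙 _))
    haveI : Mono φ.τ₃ := inferInstanceAs (Mono (𝟙 _))
    have hexmid : (ShortComplex.mk gbar h wbar2).Exact :=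
      (ShortComplex.exact_iff_of_epi_of_isIso_of_mono φ).1 hex2
    let ψ : ShortComplex.mk gbar hbar wbar ⟶ ShortComplex.mk gbar h wbar2 :=
      { τ₁ := 𝟙 _, τ₂ := 𝟙 _, τ₃ := kernel.ι i,
        comm₁₂ := by simp, comm₂₃ := by simp [hbar] }
    haveI : Epi ψ.τ₁ := inferInstanceAs (Epi (𝟙 _))
    haveI : IsIso ψ.τ₂ := inferInstanceAs (IsIso (𝟙 _))
    haveI : Mono ψ.τ₃ := inferInstanceAs (Mono (kernel.ι i))
    have hexact : (ShortComplex.mk gbar hbar wbar).Exact :=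
      (ShortComplex.exact_iff_of_epi_of_isIso_of_mono ψ).2 hexmid
    have hse : (ShortComplex.mk gbar hbar wbar).ShortExact :=
      { exact := hexact, mono_f := hmono, epi_g := hepi }
    exact hext k _ hse hcok hker


end ICEPaper
end

section
/- Let U be a homology-determined preaisle in D. Then H^k U = U[k] ∩ H holds for every k ∈ ℤ. In particular, H^k U is closed under extensions in H. -/
open CategoryTheory Limits ZeroObject

namespace ICEPaper

section Approximations

variable {C : Type*} [Category C]

/-- A subcategory `B` (given by its class of objects) of a category is contravariantly finite
if every object admits a right `B`-approximation. -/
def ContravariantlyFinite (B : Set C) : Prop :=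
  ∀ X : C, ∃ (B₀ : C) (_ : B₀ ∈ B) (f : B₀ ⟶ X),
    ∀ (B' : C) (_ : B' ∈ B) (g : B' ⟶ X), ∃ h : B' ⟶ B₀, h ≫ f = g

/-- Dually, `B` is covariantly finite if every object admits a left `B`-approximation. -/
def CovariantlyFinite (B : Set C) : Prop :=
  ∀ X : C, ∃ (B₀ : C) (_ : B₀ ∈ B) (f : X ⟶ B₀),
    ∀ (B' : C) (_ : B' ∈ B) (g : X ⟶ B'), ∃ h : B₀ ⟶ B', f ≫ h = g

end Approximations

open Pretriangulated Triangulated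

variable {D : Type*} [Category D] [Preadditive D] [HasZeroObject D] [HasShift D ℤ]
  [∀ n : ℤ, (shiftFunctor D n).Additive] [Pretriangulated D]

/-- The shifted subcategory `U[k] = {X ∣ X⟦-k⟧ ∈ U}`. -/
def shiftSet (U : Set D) (k : ℤ) : Set D := {X : D | X⟦(-k)⟧ ∈ U}

/-- A preaisle: a subcategory (full, iso-closed, containing `0`) closed under extensions and
positive shifts. -/
structure IsPreaisle (U : Set D) : Prop where
  mem_of_iso : ∀ ⦃X Y : D⦄, (X ≅ Y) → X ∈ U → Y ∈ U
  zero_mem : (0 : D) ∈ U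
  ext : ∀ (T : Triangle D), T ∈ (distTriang D) → T.obj₁ ∈ U → T.obj₃ ∈ U → T.obj₂ ∈ U
  shift : ∀ ⦃X : D⦄, X ∈ U → X⟦(1 : ℤ)⟧ ∈ U

/-- A thick subcategory: a triangulated subcategory closed under direct summands. -/
structure IsThick (E : Set D) : Prop where
  mem_of_iso : ∀ ⦃X Y : D⦄, (X ≅ Y) → X ∈ E → Y ∈ E
  zero_mem : (0 : D) ∈ E
  ext : ∀ (T : Triangle D), T ∈ (distTriang D) → T.obj₁ ∈ E → T.obj₃ ∈ E → T.obj₂ ∈ E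
  shift : ∀ ⦃X : D⦄ (k : ℤ), X ∈ E → X⟦k⟧ ∈ E
  summand : ∀ ⦃X Y : D⦄ (i : X ⟶ Y) (r : Y ⟶ X), i ≫ r = 𝟙 X → Y ∈ E → X ∈ E

variable (t : TStructure D)

/-- `D^{≤n}` as a set of objects. -/
def DLE (n : ℤ) : Set D := {X : D | t.le n X}

/-- `D^{≥n}` as a set of objects. -/
def DGE (n : ℤ) : Set D := {X : D | t.ge n X}

/-- The heart `D^{≤0} ∩ D^{≥0}` of the t-structure, as a set of objects of `D`. -/
def heartSet : Set D := {X : D | t.le 0 X ∧ t.ge 0 X}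

/-- The t-structure `t` is bounded. -/
def BoundedT : Prop := ∀ X : D, (∃ n : ℤ, t.le n X) ∧ (∃ n : ℤ, t.ge n X)

/-- The t-structure `t` is nondegenerate. -/
def NonDegenerateT : Prop :=
  (∀ X : D, (∀ n : ℤ, t.le n X) → IsZero X) ∧ (∀ X : D, (∀ n : ℤ, t.ge n X) → IsZero X)

/-- `U` is an aisle: it is the aisle (`D'^{≤0}`) of some t-structure on `D`. -/
def IsAisle (U : Set D) : Prop := ∃ t' : TStructure D, U = DLE t' 0

/-- Data realizing the heart of the t-structure `t` as an abelian category `A`: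
a fully faithful additive functor `ι : A ⥤ D` with essential image the heart of `t`,
identifying short exact sequences in `A` with distinguished triangles of `D` with all three
objects in the heart, together with the associated cohomological functor `H⁰ : D ⥤ A`
(characterized by being homological, restricting to the identity on the heart, and the
standard vanishing on `D^{≤n}` and `D^{≥n}`). -/
structure HeartData (A : Type*) [Category A] [Abelian A] where
  ι : A ⥤ D
  full : ι.Full
  faithful : ι.Faithful
  additive : ι.Additive
  mem_heart : ∀ Y : A, ι.obj Y ∈ heartSet t
  heart_mem : ∀ X : D, X ∈ heartSet t → ∃ Y : A, Nonempty (ι.obj Y ≅ X)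
  shortExact_iff : ∀ S : ShortComplex A, S.ShortExact ↔
    ∃ h : ι.obj S.X₃ ⟶ (ι.obj S.X₁)⟦(1 : ℤ)⟧,
      Triangle.mk (ι.map S.f) (ι.map S.g) h ∈ distTriang D
  H0 : D ⥤ A
  homological : H0.IsHomological
  H0_additive : H0.Additive
  heartIso : ι ⋙ H0 ≅ 𝟭 A
  LE_vanish : ∀ (X : D) (n k : ℤ), t.le n X → n < k → IsZero (H0.obj (X⟦k⟧))
  GE_vanish : ∀ (X : D) (n k : ℤ), t.ge n X → k < n → IsZero (H0.obj (X⟦k⟧))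

variable {t} {A : Type*} [Category A] [Abelian A] (hd : HeartData t A)

/-- The cohomology `H^k = H⁰ ∘ ⟦k⟧`, on objects. -/
def HeartData.H (k : ℤ) (X : D) : A := hd.H0.obj (X⟦k⟧)

/-- `U ⊆ D` is homology-determined: `X ∈ U` iff `H^k X ∈ U[k]` for all `k ∈ ℤ`. -/
def IsHomDet (U : Set D) : Prop :=
  ∀ X : D, X ∈ U ↔ ∀ k : ℤ, hd.ι.obj (hd.H k X) ∈ shiftSet U k

/-- `H^k U`, the image of `U` under `H^k`, as a subcategory of the heart `A`
(closed under isomorphisms). -/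
def HkSet (U : Set D) (k : ℤ) : Set A := {Y : A | ∃ X ∈ U, Nonempty (Y ≅ hd.H k X)}

/-- `θ(C) = {X ∈ D ∣ H^k X ∈ C(k) for all k ∈ ℤ}`. -/
def thetaSet (C : ℤ → Set A) : Set D := {X : D | ∀ k : ℤ, hd.H k X ∈ C k}

/-- `E ⊆ D` is `H⁰`-stable: `H⁰ X ∈ E` for every `X ∈ E`. -/
def H0Stable (E : Set D) : Prop := ∀ X ∈ E, hd.ι.obj (hd.H 0 X) ∈ E


/-- **Proposition.** Let `U` be a homology-determined preaisle in `D`. Then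
`H^k U = U[k] ∩ H` holds for every `k ∈ ℤ`; in particular `H^k U` is closed under
extensions in the heart `H`. -/
theorem HkSet_eq_shiftSet_inter_heart
    {D : Type*} [Category D] [Preadditive D] [HasZeroObject D] [HasShift D ℤ]
    [∀ n : ℤ, (shiftFunctor D n).Additive] [Pretriangulated D]
    {t : Triangulated.TStructure D} {A : Type*} [Category A] [Abelian A]
    (hd : HeartData t A) {U : Set D} (hU : IsPreaisle U) (hdet : IsHomDet hd U) :
    (∀ k : ℤ, HkSet hd U k = {Y : A | hd.ι.obj Y ∈ shiftSet U k}) ∧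
      ∀ k : ℤ, ClosedUnderExtensions (HkSet hd U k) := by
  have key : ∀ k : ℤ, HkSet hd U k = {Y : A | hd.ι.obj Y ∈ shiftSet U k} := by
    intro k
    ext Y
    constructor
    · rintro ⟨X, hX, ⟨e⟩⟩
      have h := (hdet X).mp hX k
      exact hU.mem_of_iso ((shiftFunctor D (-k)).mapIso (hd.ι.mapIso e)).symm h
    · intro hY
      refine ⟨(hd.ι.obj Y)⟦(-k)⟧, hY, ⟨?_⟩⟩
      exact (hd.heartIso.app Y).symm ≪≫ hd.H0.mapIso (shiftNegShift (hd.ι.obj Y) k).symm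
  refine ⟨key, fun k S hS h1 h3 => ?_⟩
  rw [key] at h1 h3 ⊢
  obtain ⟨h, hT⟩ := (hd.shortExact_iff S).mp hS
  exact hU.ext _ (Pretriangulated.Triangle.shift_distinguished _ hT (-k)) h1 h3

end ICEPaper
end

section
/- Let C = {C(k)}_{k∈ℤ} be a narrow sequence in the heart H. Then the subcategory θ(C) = {X ∈ D | H^k X ∈ C(k) for all k ∈ ℤ} is a homology-determined preaisle in D. -/
open CategoryTheory Limits ZeroObject

namespace ICEPaper

open Pretriangulated Triangulated

variable {D : Type*} [Category D] [Preadditive D] [HasZeroObject D] [HasShift D ℤ]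
  [∀ n : ℤ, (shiftFunctor D n).Additive] [Pretriangulated D]

variable (t : TStructure D)

variable {t} {A : Type*} [Category A] [Abelian A] (hd : HeartData t A)

/-- **Proposition.** If `C = {C(k)}_{k∈ℤ}` is a narrow sequence in the heart `H`, then
`θ(C) = {X ∈ D ∣ H^k X ∈ C(k) for all k}` is a homology-determined preaisle in `D`. -/
theorem isPreaisle_isHomDet_thetaSet_of_narrow
    {D : Type*} [Category D] [Preadditive D] [HasZeroObject D] [HasShift D ℤ]
    [∀ n : ℤ, (shiftFunctor D n).Additive] [Pretriangulated D]
    {t : Triangulated.TStructure D} {A : Type*} [Category A] [Abelian A]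
    (hd : HeartData t A) {C : ℤ → Set A} (hC : IsNarrowSequence C) :
    IsPreaisle (thetaSet hd C) ∧ IsHomDet hd (thetaSet hd C) := by
  classical
  haveI := hd.homological
  haveI := hd.H0_additive
  letI : hd.H0.ShiftSequence ℤ := Functor.ShiftSequence.tautological _ _
  -- basic facts
  have hzero : ∀ m : ℤ, (0 : A) ∈ C m := fun m => (hC.subcat m).zero_mem
  have hiso : ∀ (m : ℤ) ⦃Y Z : A⦄, (Y ≅ Z) → Y ∈ C m → Z ∈ C m :=
    fun m _ _ e h => (hC.subcat m).mem_of_iso e h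
  have hzmem : ∀ (m : ℤ) (Y : A), IsZero Y → Y ∈ C m := fun m Y hY =>
    hiso m hY.isoZero.symm (hzero m)
  -- `H^m` of an object of the heart shifted by `-k`
  have heartH : ∀ (Y : A) (k m : ℤ),
      hd.H m ((hd.ι.obj Y)⟦(-k)⟧) ≅ hd.H0.obj ((hd.ι.obj Y)⟦(m - k)⟧) :=
    fun Y k m => (hd.H0.mapIso
      (((shiftFunctorAdd' D (-k) m (m - k) (by ring)).app (hd.ι.obj Y)).symm))
  have heartH_ne : ∀ (Y : A) (k m : ℤ), m ≠ k →
      IsZero (hd.H m ((hd.ι.obj Y)⟦(-k)⟧)) := by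
    intro Y k m hmk
    refine IsZero.of_iso ?_ (heartH Y k m)
    rcases lt_or_gt_of_ne (sub_ne_zero.mpr hmk) with h | h
    · exact hd.GE_vanish _ 0 _ (hd.mem_heart Y).2 h
    · exact hd.LE_vanish _ 0 _ (hd.mem_heart Y).1 h
  have heartH_eq : ∀ (Y : A) (k : ℤ), hd.H k ((hd.ι.obj Y)⟦(-k)⟧) ≅ Y := by
    intro Y k
    refine (heartH Y k k).trans ?_
    have e1 : (hd.ι.obj Y)⟦(k - k)⟧ ≅ hd.ι.obj Y := by
      refine (eqToIso (by rw [sub_self])).trans ((shiftFunctorZero D ℤ).app (hd.ι.obj Y))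
    exact (hd.H0.mapIso e1).trans (hd.heartIso.app Y)
  constructor
  · constructor
    · intro X Y e hX k
      exact hiso k (hd.H0.mapIso ((shiftFunctor D k).mapIso e)) (hX k)
    · intro k
      refine hzmem k _ ?_
      exact Functor.map_isZero _ (Functor.map_isZero _ (isZero_zero D))
    · -- closed under extensions, via the long exact sequence and narrowness
      intro T hT h1 h3 k
      have e1 := hd.H0.homologySequence_exact₁ T hT (k - 1) k (by ring)
      have e2 := hd.H0.homologySequence_exact₂ T hT k
      have e3 := hd.H0.homologySequence_exact₃ T hT k (k + 1) rfl
      have hS : (ComposableArrows.mk₄ (hd.H0.homologySequenceδ T (k - 1) k (by ring))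
          ((hd.H0.shift k).map T.mor₁) ((hd.H0.shift k).map T.mor₂)
          (hd.H0.homologySequenceδ T k (k + 1) rfl)).Exact :=
        ComposableArrows.exact_of_δ₀ e1.exact_toComposableArrows
          (ComposableArrows.exact_of_δ₀ e2.exact_toComposableArrows
            e3.exact_toComposableArrows)
      exact hC.narrow k _ hS (h3 (k - 1)) (h1 k) (h3 k) (h1 (k + 1))
    · intro X hX k
      have e : hd.H k (X⟦(1 : ℤ)⟧) ≅ hd.H (k + 1) X :=
        hd.H0.mapIso (((shiftFunctorAdd' D 1 k (k + 1) (by ring)).app X).symm)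
      exact hiso k e.symm (hC.decreasing k (hX (k + 1)))
  · intro X
    constructor
    · intro hX k m
      by_cases hmk : m = k
      · subst hmk
        exact hiso m (heartH_eq (hd.H m X) m).symm (hX m)
      · exact hzmem m _ (heartH_ne _ _ _ hmk)
    · intro h k
      exact hiso k (heartH_eq (hd.H k X) k) (h k k)


end ICEPaper
end

section
/- Let U be a homology-determined preaisle in D. Then the sequence μ(U) = {C(k)}_{k∈ℤ} of subcategories of H defined by C(k) = H^k U is a narrow sequence in H. -/
open CategoryTheory Limits ZeroObject

namespace ICEPaper

open Pretriangulated Triangulated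

variable {D : Type*} [Category D] [Preadditive D] [HasZeroObject D] [HasShift D ℤ]
  [∀ n : ℤ, (shiftFunctor D n).Additive] [Pretriangulated D]

variable (t : TStructure D)

variable {t} {A : Type*} [Category A] [Abelian A] (hd : HeartData t A)

section NarrowAux

/-- The canonical isomorphism `H⁰((ι X⟦-m⟧)⟦m⟧) ≅ X` for `X` in the heart. -/
noncomputable def HeartData.alphaIso (m : ℤ) (X : A) :
    hd.H0.obj (((hd.ι.obj X)⟦(-m)⟧)⟦m⟧) ≅ X :=
  hd.H0.mapIso ((shiftFunctorCompIsoId D (-m) m (by ring)).app (hd.ι.obj X)) ≪≫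
    hd.heartIso.app X

lemma HeartData.alphaIso_naturality (m : ℤ) {X Y : A} (f : X ⟶ Y) :
    hd.H0.map (((hd.ι.map f)⟦(-m)⟧')⟦m⟧') ≫ (hd.alphaIso m Y).hom =
      (hd.alphaIso m X).hom ≫ f := by
  have h1 := (shiftFunctorCompIsoId D (-m) m (by ring)).hom.naturality (hd.ι.map f)
  have h2 := hd.heartIso.hom.naturality f
  dsimp [HeartData.alphaIso] at h1 h2 ⊢
  rw [← Functor.map_comp_assoc]
  erw [h1]
  rw [Functor.map_comp, Category.assoc]
  erw [h2]
  rw [Category.assoc]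

lemma mem_HkSet_iff {U : Set D} (hU : IsPreaisle U) (hdet : IsHomDet hd U) (k : ℤ) (Y : A) :
    Y ∈ HkSet hd U k ↔ (hd.ι.obj Y)⟦(-k)⟧ ∈ U := by
  constructor
  · rintro ⟨X, hX, ⟨e⟩⟩
    have h := ((hdet X).1 hX) k
    exact hU.mem_of_iso ((shiftFunctor D (-k)).mapIso (hd.ι.mapIso e.symm)) h
  · intro hXU
    exact ⟨(hd.ι.obj Y)⟦(-k)⟧, hXU, ⟨(hd.alphaIso k Y).symm⟩⟩

/-- transporting exactness along a mono in the third spot -/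
lemma exact_of_comp_mono' {B : Type*} [Category B] [Abelian B] {X Y Z W : B}
    {u : X ⟶ Y} {v : Y ⟶ Z} {m : Z ⟶ W} [Mono m] {g : Y ⟶ W} (hg : v ≫ m = g)
    (w : u ≫ g = 0) (hw : (ShortComplex.mk u g w).Exact) :
    (ShortComplex.mk u v (by
      rw [← cancel_mono m, Category.assoc, hg, w, Limits.zero_comp])).Exact := by
  refine (ShortComplex.exact_iff_of_epi_of_isIso_of_mono
    (S₁ := ShortComplex.mk u v (by
      rw [← cancel_mono m, Category.assoc, hg, w, Limits.zero_comp]))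
    (S₂ := ShortComplex.mk u g w)
    { τ₁ := 𝟙 _, τ₂ := 𝟙 _, τ₃ := m,
      comm₁₂ := by simp, comm₂₃ := by simp [hg] }).2 hw


/-- Two epi-cokernels of the same map have isomorphic targets. -/
lemma cokernelIso_of_exact_of_exact {B : Type*} [Category B] [Abelian B] {X Y Z Z' : B}
    {u : X ⟶ Y} {v : Y ⟶ Z} {v' : Y ⟶ Z'} (w : u ≫ v = 0) (w' : u ≫ v' = 0)
    (hv : (ShortComplex.mk u v w).Exact) (hv' : (ShortComplex.mk u v' w').Exact)
    (ev : Epi v) (ev' : Epi v') : Nonempty (Z ≅ Z') := by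
  haveI : Epi (ShortComplex.mk u v w).g := ev
  haveI : Epi (ShortComplex.mk u v' w').g := ev'
  exact ⟨IsColimit.coconePointUniqueUpToIso hv.gIsCokernel hv'.gIsCokernel⟩

/-- Two mono-kernels of the same map have isomorphic sources. -/
lemma kernelIso_of_exact_of_exact {B : Type*} [Category B] [Abelian B] {X X' Y Z : B}
    {u : X ⟶ Y} {u' : X' ⟶ Y} {v : Y ⟶ Z} (w : u ≫ v = 0) (w' : u' ≫ v = 0)
    (hu : (ShortComplex.mk u v w).Exact) (hu' : (ShortComplex.mk u' v w').Exact)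
    (mu : Mono u) (mu' : Mono u') : Nonempty (X ≅ X') := by
  haveI : Mono (ShortComplex.mk u v w).f := mu
  haveI : Mono (ShortComplex.mk u' v w').f := mu'
  exact ⟨IsLimit.conePointUniqueUpToIso hu.fIsKernel hu'.fIsKernel⟩

/-- `HkSet` is closed under extensions. -/
lemma HkSet_ext {U : Set D} (hU : IsPreaisle U) (hdet : IsHomDet hd U) (k : ℤ)
    (S : ShortComplex A) (hS : S.ShortExact)
    (h₁ : S.X₁ ∈ HkSet hd U k) (h₃ : S.X₃ ∈ HkSet hd U k) : S.X₂ ∈ HkSet hd U k := by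
  rw [mem_HkSet_iff hd hU hdet] at h₁ h₃ ⊢
  obtain ⟨δ, hT⟩ := (hd.shortExact_iff S).1 hS
  exact hU.ext _ (Pretriangulated.Triangle.shift_distinguished _ hT (-k)) h₁ h₃

end NarrowAux

/-- **Proposition.** If `U` is a homology-determined preaisle in `D`, then
`μ(U) = {H^k U}_{k∈ℤ}` is a narrow sequence in the heart `H`. -/
theorem isNarrowSequence_HkSet_of_homDet_preaisle
    {D : Type*} [Category D] [Preadditive D] [HasZeroObject D] [HasShift D ℤ]
    [∀ n : ℤ, (shiftFunctor D n).Additive] [Pretriangulated D]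
    {t : Triangulated.TStructure D} {A : Type*} [Category A] [Abelian A]
    (hd : HeartData t A) {U : Set D} (hU : IsPreaisle U) (hdet : IsHomDet hd U) :
    IsNarrowSequence (fun k => HkSet hd U k) := by
  classical
  haveI := hd.homological
  haveI := hd.additive
  letI : hd.H0.ShiftSequence ℤ := Functor.ShiftSequence.tautological _ _
  refine ⟨fun k => ⟨?_, ?_, ?_⟩, fun k Y hY => ?_, fun k S hS hA hB hD hE => ?_⟩
  · -- closed under isomorphisms
    rintro X Y e ⟨Z, hZ, ⟨e'⟩⟩
    exact ⟨Z, hZ, ⟨e.symm ≪≫ e'⟩⟩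
  · -- zero object
    rw [mem_HkSet_iff hd hU hdet]
    exact hU.mem_of_iso
      ((Functor.map_isZero (shiftFunctor D (-k))
        (Functor.map_isZero hd.ι (isZero_zero A))).isoZero).symm hU.zero_mem
  · -- biproducts
    intro X Y hX hY
    haveI : PreservesBinaryBiproducts hd.ι :=
      preservesBinaryBiproducts_of_preservesBiproducts _
    haveI : PreservesBinaryBiproducts (shiftFunctor D (-k)) :=
      preservesBinaryBiproducts_of_preservesBiproducts _
    rw [mem_HkSet_iff hd hU hdet] at hX hY ⊢
    have hmem := hU.ext _ (binaryBiproductTriangle_distinguished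
      ((hd.ι.obj X)⟦(-k)⟧) ((hd.ι.obj Y)⟦(-k)⟧)) hX hY
    exact hU.mem_of_iso
      ((shiftFunctor D (-k)).mapIso (hd.ι.mapBiprod X Y) ≪≫
        (shiftFunctor D (-k)).mapBiprod _ _).symm hmem
  · -- decreasing
    have hY' : (hd.ι.obj Y)⟦(-(k+1))⟧ ∈ U := (mem_HkSet_iff hd hU hdet (k+1) Y).1 hY
    refine (mem_HkSet_iff hd hU hdet k Y).2 ?_
    exact hU.mem_of_iso
      (((shiftFunctorAdd' D (-(k+1)) 1 (-k) (by ring)).app (hd.ι.obj Y)).symm)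
      (hU.shift hY')
  · -- the narrow condition
    -- notation for the maps of the exact sequence
    have zfg : S.map' 0 1 ≫ S.map' 1 2 = 0 := hS.toIsComplex.zero 0
    have zgh : S.map' 1 2 ≫ S.map' 2 3 = 0 := hS.toIsComplex.zero 1
    have zhi : S.map' 2 3 ≫ S.map' 3 4 = 0 := hS.toIsComplex.zero 2
    -- memberships, unfolded
    have hAU : (hd.ι.obj (S.obj' 0))⟦(-(k-1))⟧ ∈ U :=
      (mem_HkSet_iff hd hU hdet (k-1) _).1 hA
    have hBU : (hd.ι.obj (S.obj' 1))⟦(-k)⟧ ∈ U :=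
      (mem_HkSet_iff hd hU hdet k _).1 hB
    have hDU : (hd.ι.obj (S.obj' 3))⟦(-k)⟧ ∈ U :=
      (mem_HkSet_iff hd hU hdet k _).1 hD
    have hEU : (hd.ι.obj (S.obj' 4))⟦(-(k+1))⟧ ∈ U :=
      (mem_HkSet_iff hd hU hdet (k+1) _).1 hE
    -- the two auxiliary cones
    obtain ⟨X₁, v₁, w₁, hT1⟩ :=
      Pretriangulated.distinguished_cocone_triangle ((hd.ι.map (S.map' 0 1))⟦(-k)⟧')
    obtain ⟨X₂, v₂, w₂, hT2⟩ :=
      Pretriangulated.distinguished_cocone_triangle ((hd.ι.map (S.map' 3 4))⟦(-(k+1))⟧')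
    -- X₁ ∈ U
    have hA1 : ((hd.ι.obj (S.obj' 0))⟦(-k)⟧)⟦(1:ℤ)⟧ ∈ U :=
      hU.mem_of_iso ((shiftFunctorAdd' D (-k) 1 (-(k-1)) (by ring)).app _) hAU
    have hX₁U : X₁ ∈ U :=
      hU.ext (Triangle.mk ((hd.ι.map (S.map' 0 1))⟦(-k)⟧') v₁ w₁).rotate
        (Pretriangulated.rot_of_distTriang _ hT1) hBU hA1
    -- X₂ ∈ U
    have hD1 : ((hd.ι.obj (S.obj' 3))⟦(-(k+1))⟧)⟦(1:ℤ)⟧ ∈ U :=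
      hU.mem_of_iso ((shiftFunctorAdd' D (-(k+1)) 1 (-k) (by ring)).app _) hDU
    have hX₂U : X₂ ∈ U :=
      hU.ext (Triangle.mk ((hd.ι.map (S.map' 3 4))⟦(-(k+1))⟧') v₂ w₂).rotate
        (Pretriangulated.rot_of_distTriang _ hT2) hEU hD1
    -- naturality of the `alphaIso`'s, in the form we need
    have nat : ∀ {P Q : A} (φ : P ⟶ Q),
        (hd.H0.shift k).map ((hd.ι.map φ)⟦(-k)⟧') ≫ (hd.alphaIso k Q).hom =
          (hd.alphaIso k P).hom ≫ φ := fun φ => hd.alphaIso_naturality k φ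
    have nat' : ∀ {P Q : A} (φ : P ⟶ Q),
        (hd.H0.shift (k+1)).map ((hd.ι.map φ)⟦(-(k+1))⟧') ≫ (hd.alphaIso (k+1) Q).hom =
          (hd.alphaIso (k+1) P).hom ≫ φ := fun φ => hd.alphaIso_naturality (k+1) φ
    -- vanishing of boundary homologies
    have hzA : IsZero ((hd.H0.shift (k+1)).obj ((hd.ι.obj (S.obj' 0))⟦(-k)⟧)) :=
      hd.LE_vanish _ k (k+1)
        (t.le_shift 0 (-k) k (by ring) _ (hd.mem_heart (S.obj' 0)).1) (by omega)
    have hzE : IsZero ((hd.H0.shift k).obj ((hd.ι.obj (S.obj' 4))⟦(-(k+1))⟧)) :=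
      hd.GE_vanish _ (k+1) k
        (t.ge_shift 0 (-(k+1)) (k+1) (by ring) _ (hd.mem_heart (S.obj' 4)).2) (by omega)
    -- ** left side: H^k X₁ ≅ kernel (S.map' 2 3) **
    have hepi1 : Epi ((hd.H0.shift k).map v₁) :=
      (hd.H0.homologySequence_exact₃
        (Triangle.mk ((hd.ι.map (S.map' 0 1))⟦(-k)⟧') v₁ w₁) hT1 k (k+1) rfl).epi_f
        (hzA.eq_of_tgt _ _)
    have ex2 := hd.H0.homologySequence_exact₂
      (Triangle.mk ((hd.ι.map (S.map' 0 1))⟦(-k)⟧') v₁ w₁) hT1 k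
    have hcomp1 : (hd.H0.shift k).map ((hd.ι.map (S.map' 0 1))⟦(-k)⟧') ≫
        (hd.H0.shift k).map v₁ = 0 :=
      hd.H0.homologySequence_comp
        (Triangle.mk ((hd.ι.map (S.map' 0 1))⟦(-k)⟧') v₁ w₁) hT1 k
    have hBinv : S.map' 0 1 ≫ (hd.alphaIso k (S.obj' 1)).inv =
        (hd.alphaIso k (S.obj' 0)).inv ≫
          (hd.H0.shift k).map ((hd.ι.map (S.map' 0 1))⟦(-k)⟧') := by
      exact ((Iso.inv_comp_eq _).2 (((Iso.eq_comp_inv _).2 (nat (S.map' 0 1))).trans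
        (Category.assoc _ _ _))).symm
    have zp : S.map' 0 1 ≫
        ((hd.alphaIso k (S.obj' 1)).inv ≫ (hd.H0.shift k).map v₁) = 0 := by
      exact (Category.assoc _ _ _).symm.trans ((hBinv =≫ (hd.H0.shift k).map v₁).trans
        ((Category.assoc _ _ _).trans (((hd.alphaIso k (S.obj' 0)).inv ≫= hcomp1).trans comp_zero)))
    have exS₁ : (ShortComplex.mk (S.map' 0 1)
        ((hd.alphaIso k (S.obj' 1)).inv ≫ (hd.H0.shift k).map v₁) zp).Exact := by
      refine ShortComplex.exact_of_iso ?_ ex2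
      refine ShortComplex.isoMk (hd.alphaIso k (S.obj' 0)) (hd.alphaIso k (S.obj' 1))
        (Iso.refl _) ?_ ?_
      · exact (nat (S.map' 0 1)).symm
      · exact (Iso.hom_inv_id_assoc _ _).trans (Category.comp_id _).symm
    have he : Epi (kernel.lift (S.map' 2 3) (S.map' 1 2) zgh) :=
      (ShortComplex.exact_iff_epi_kernel_lift _).1 (hS.exact 1)
    have exfe : (ShortComplex.mk (S.map' 0 1)
        (kernel.lift (S.map' 2 3) (S.map' 1 2) zgh)
        (by rw [← cancel_mono (kernel.ι (S.map' 2 3)), Category.assoc, kernel.lift_ι,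
              zfg, Limits.zero_comp])).Exact :=
      exact_of_comp_mono' (kernel.lift_ι _ _ _) zfg (hS.exact 0)
    have hepiP : Epi ((hd.alphaIso k (S.obj' 1)).inv ≫ (hd.H0.shift k).map v₁) := by
      haveI := hepi1
      exact epi_comp' inferInstance hepi1
    obtain ⟨isoK⟩ := cokernelIso_of_exact_of_exact zp _ exS₁ exfe hepiP he
    have hKh : kernel (S.map' 2 3) ∈ HkSet hd U k := ⟨X₁, hX₁U, ⟨isoK.symm⟩⟩
    -- ** right side: H^k X₂ ≅ kernel (S.map' 3 4) **
    have hmono2 : Mono (hd.H0.homologySequenceδ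
        (Triangle.mk ((hd.ι.map (S.map' 3 4))⟦(-(k+1))⟧') v₂ w₂) k (k+1) rfl) :=
      (hd.H0.homologySequence_exact₃
        (Triangle.mk ((hd.ι.map (S.map' 3 4))⟦(-(k+1))⟧') v₂ w₂) hT2 k (k+1) rfl).mono_g
        (hzE.eq_of_src _ _)
    have ex1 := hd.H0.homologySequence_exact₁
      (Triangle.mk ((hd.ι.map (S.map' 3 4))⟦(-(k+1))⟧') v₂ w₂) hT2 k (k+1) rfl
    have hδcomp : (hd.H0.homologySequenceδ
        (Triangle.mk ((hd.ι.map (S.map' 3 4))⟦(-(k+1))⟧') v₂ w₂) k (k+1) rfl) ≫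
        (hd.H0.shift (k+1)).map ((hd.ι.map (S.map' 3 4))⟦(-(k+1))⟧') = 0 :=
      hd.H0.homologySequenceδ_comp
        (Triangle.mk ((hd.ι.map (S.map' 3 4))⟦(-(k+1))⟧') v₂ w₂) hT2 k (k+1) rfl
    have zδ : ((hd.H0.homologySequenceδ
        (Triangle.mk ((hd.ι.map (S.map' 3 4))⟦(-(k+1))⟧') v₂ w₂) k (k+1) rfl) ≫
        (hd.alphaIso (k+1) (S.obj' 3)).hom) ≫ S.map' 3 4 = 0 := by
      erw [Category.assoc, ← nat' (S.map' 3 4), ← Category.assoc, hδcomp, Limits.zero_comp]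
    have exS₂ : (ShortComplex.mk ((hd.H0.homologySequenceδ
        (Triangle.mk ((hd.ι.map (S.map' 3 4))⟦(-(k+1))⟧') v₂ w₂) k (k+1) rfl) ≫
        (hd.alphaIso (k+1) (S.obj' 3)).hom) (S.map' 3 4) zδ).Exact := by
      refine ShortComplex.exact_of_iso ?_ ex1
      refine ShortComplex.isoMk (Iso.refl _) (hd.alphaIso (k+1) (S.obj' 3))
        (hd.alphaIso (k+1) (S.obj' 4)) ?_ ?_
      · simp
      · exact (nat' (S.map' 3 4)).symm
    have he' : Epi (kernel.lift (S.map' 3 4) (S.map' 2 3) zhi) :=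
      (ShortComplex.exact_iff_epi_kernel_lift _).1 (hS.exact 2)
    have exki : (ShortComplex.mk (kernel.ι (S.map' 3 4)) (S.map' 3 4)
        (kernel.condition _)).Exact :=
      ShortComplex.exact_of_f_is_kernel _ (kernelIsKernel _)
    have hmonoδ' : Mono ((hd.H0.homologySequenceδ
        (Triangle.mk ((hd.ι.map (S.map' 3 4))⟦(-(k+1))⟧') v₂ w₂) k (k+1) rfl) ≫
        (hd.alphaIso (k+1) (S.obj' 3)).hom) := by
      haveI := hmono2
      exact mono_comp' hmono2 (inferInstanceAs (Mono (hd.alphaIso (k+1) (S.obj' 3)).hom))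
    obtain ⟨isoJ⟩ := kernelIso_of_exact_of_exact zδ _ exS₂ exki hmonoδ' inferInstance
    have hKi : kernel (S.map' 3 4) ∈ HkSet hd U k := ⟨X₂, hX₂U, ⟨isoJ.symm⟩⟩
    -- ** the short exact sequence 0 → ker h → C → ker i → 0 **
    have exke' : (ShortComplex.mk (kernel.ι (S.map' 2 3))
        (kernel.lift (S.map' 3 4) (S.map' 2 3) zhi)
        (by rw [← cancel_mono (kernel.ι (S.map' 3 4)), Category.assoc, kernel.lift_ι,
              kernel.condition, Limits.zero_comp])).Exact :=
      exact_of_comp_mono' (kernel.lift_ι _ _ _) (kernel.condition _)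
        (ShortComplex.exact_of_f_is_kernel _ (kernelIsKernel _))
    have hses : (ShortComplex.mk (kernel.ι (S.map' 2 3))
        (kernel.lift (S.map' 3 4) (S.map' 2 3) zhi)
        (by rw [← cancel_mono (kernel.ι (S.map' 3 4)), Category.assoc, kernel.lift_ι,
              kernel.condition, Limits.zero_comp])).ShortExact :=
      { exact := exke'
        mono_f := show Mono (kernel.ι (S.map' 2 3)) from inferInstance
        epi_g := he' }
    exact HkSet_ext hd hU hdet k _ hses hKh hKi

end ICEPaper
end

section
/- The maps θ and μ, given by θ(C) = {X ∈ D | H^k X ∈ C(k) for all k ∈ ℤ} for a narrow sequence C = {C(k)}_{k∈ℤ} in H, and μ(U) = {H^k U}_{k∈ℤ} for a homology-determined preaisle U in D, are mutually inverse bijections between the set of narrow sequences in H and the set of homology-determined preaisles in D. -/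
open CategoryTheory Limits ZeroObject

namespace ICEPaper

open Pretriangulated Triangulated

variable {D : Type*} [Category D] [Preadditive D] [HasZeroObject D] [HasShift D ℤ]
  [∀ n : ℤ, (shiftFunctor D n).Additive] [Pretriangulated D]

variable (t : TStructure D)

variable {t} {A : Type*} [Category A] [Abelian A] (hd : HeartData t A)

/-! ### Auxiliary development -/

section AuxAbelian

attribute [local instance] CategoryTheory.Abelian.Pseudoelement.objectToSort
  CategoryTheory.Abelian.Pseudoelement.homToFun

open CategoryTheory.Abelian in
/-- If `f₁, f₂` and `f₂, f₃` are exact, then `cokernel f₁ ≅ kernel f₃`. -/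
noncomputable def cokerIsoKer {B : Type*} [Category B] [Abelian B]
    {X Y Z W : B} (f₁ : X ⟶ Y) (f₂ : Y ⟶ Z) (f₃ : Z ⟶ W)
    (w₁ : f₁ ≫ f₂ = 0) (w₂ : f₂ ≫ f₃ = 0)
    (h₁ : (ShortComplex.mk f₁ f₂ w₁).Exact) (h₂ : (ShortComplex.mk f₂ f₃ w₂).Exact) :
    cokernel f₁ ≅ kernel f₃ := by
  set u : cokernel f₁ ⟶ Z := cokernel.desc f₁ f₂ w₁ with hu_def
  have huf₃ : u ≫ f₃ = 0 := by
    rw [← cancel_epi (cokernel.π f₁), cokernel.π_desc_assoc, w₂, comp_zero]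
  set v : cokernel f₁ ⟶ kernel f₃ := kernel.lift f₃ u huf₃ with hv_def
  have hvι : v ≫ kernel.ι f₃ = u := kernel.lift_ι _ _ _
  have hπu : cokernel.π f₁ ≫ u = f₂ := cokernel.π_desc _ _ _
  have hkey : cokernel.π f₁ ≫ v ≫ kernel.ι f₃ = f₂ := by rw [hvι, hπu]
  have hmono : Mono v := by
    apply Pseudoelement.mono_of_zero_of_map_zero
    intro x hx
    obtain ⟨y, hy⟩ := Pseudoelement.pseudo_surjective_of_epi (cokernel.π f₁) x
    have h2 : f₂ y = 0 := by
      have hux : u x = 0 := by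
        rw [← hvι, Pseudoelement.comp_apply, hx, Pseudoelement.apply_zero]
      rw [← hπu, Pseudoelement.comp_apply, hy, hux]
    obtain ⟨z, hz⟩ := Pseudoelement.pseudo_exact_of_exact h₁ y h2
    rw [← hy, ← hz, ← Pseudoelement.comp_apply, cokernel.condition,
      Pseudoelement.zero_apply]
  have hepi : Epi v := by
    apply Pseudoelement.epi_of_pseudo_surjective
    intro w
    have hb : f₃ (kernel.ι f₃ w) = 0 := by
      rw [← Pseudoelement.comp_apply, kernel.condition, Pseudoelement.zero_apply]
    obtain ⟨c, hc⟩ := Pseudoelement.pseudo_exact_of_exact h₂ (kernel.ι f₃ w) hb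
    refine ⟨cokernel.π f₁ c, Pseudoelement.pseudo_injective_of_mono (kernel.ι f₃) ?_⟩
    rw [← Pseudoelement.comp_apply, ← Pseudoelement.comp_apply, hkey, hc]
  have := isIso_of_mono_of_epi v
  exact asIso v

end AuxAbelian

namespace HeartData

/-- The tautological shift sequence on `H⁰`. -/
noncomputable def seq : hd.H0.ShiftSequence ℤ := Functor.ShiftSequence.tautological _ _

/-- The action of `H^k` on morphisms. -/
noncomputable def Hmap (k : ℤ) {X Y : D} (f : X ⟶ Y) : hd.H k X ⟶ hd.H k Y :=
  hd.H0.map (f⟦k⟧')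

/-- The action of `H^k` on isomorphisms. -/
noncomputable def Hiso (k : ℤ) {X Y : D} (e : X ≅ Y) : hd.H k X ≅ hd.H k Y :=
  hd.H0.mapIso ((shiftFunctor D k).mapIso e)

/-- `H^k (X⟦n⟧) ≅ H^m X` when `n + k = m`. -/
noncomputable def Hshift (n k m : ℤ) (h : n + k = m) (X : D) :
    hd.H k (X⟦n⟧) ≅ hd.H m X :=
  (hd.H0.mapIso ((shiftFunctorAdd' D n k m h).app X)).symm

lemma isZero_H_of_isZero {X : D} (hX : IsZero X) (k : ℤ) : IsZero (hd.H k X) := by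
  haveI := hd.H0_additive
  exact hd.H0.map_isZero ((shiftFunctor D k).map_isZero hX)

lemma isZero_H_heart (Y : A) {m : ℤ} (hm : m ≠ 0) : IsZero (hd.H m (hd.ι.obj Y)) := by
  rcases lt_or_gt_of_ne hm with h | h
  · exact hd.GE_vanish _ 0 m (hd.mem_heart Y).2 h
  · exact hd.LE_vanish _ 0 m (hd.mem_heart Y).1 h

/-- `H^0` restricted to the heart is the identity. -/
noncomputable def heartH (Y : A) : hd.H 0 (hd.ι.obj Y) ≅ Y :=
  hd.H0.mapIso ((shiftFunctorZero D ℤ).app (hd.ι.obj Y)) ≪≫ hd.heartIso.app Y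

lemma heartH_naturality {Y Z : A} (f : Y ⟶ Z) :
    hd.Hmap 0 (hd.ι.map f) ≫ (hd.heartH Z).hom = (hd.heartH Y).hom ≫ f := by
  dsimp only [H, Hmap, heartH, Iso.trans_hom, Functor.mapIso_hom, Iso.app_hom]
  rw [← Category.assoc, ← Functor.map_comp,
    (shiftFunctorZero D ℤ).hom.naturality (hd.ι.map f), Functor.map_comp,
    Category.assoc, Category.assoc]
  congr 1
  exact hd.heartIso.hom.naturality f

/-- `H^k ((ι Y)⟦-k⟧) ≅ Y`. -/
noncomputable def heartHshift (Y : A) (k : ℤ) : hd.H k ((hd.ι.obj Y)⟦(-k)⟧) ≅ Y :=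
  hd.Hshift (-k) k 0 (by ring) (hd.ι.obj Y) ≪≫ hd.heartH Y

lemma isZero_heartHshift (Y : A) {j k : ℤ} (hjk : j ≠ k) :
    IsZero (hd.H j ((hd.ι.obj Y)⟦(-k)⟧)) := by
  refine IsZero.of_iso ?_ (hd.Hshift (-k) j (-k + j) rfl (hd.ι.obj Y))
  exact hd.isZero_H_heart Y (by omega)

/-- The subcategory of the heart at level `k` determined by `U`. -/
def lev (U : Set D) (k : ℤ) : Set A := {Y | (hd.ι.obj Y)⟦(-k)⟧ ∈ U}

lemma lev_mem_of_iso {U : Set D} (hU : IsPreaisle U) {k : ℤ} {Y Z : A} (e : Y ≅ Z)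
    (hY : Y ∈ hd.lev U k) : Z ∈ hd.lev U k :=
  hU.mem_of_iso ((shiftFunctor D (-k)).mapIso (hd.ι.mapIso e)) hY

lemma lev_zero {U : Set D} (hU : IsPreaisle U) {k : ℤ} {Y : A} (hY : IsZero Y) :
    Y ∈ hd.lev U k := by
  haveI := hd.additive
  have h1 : IsZero ((hd.ι.obj Y)⟦(-k)⟧) :=
    (shiftFunctor D (-k)).map_isZero (hd.ι.map_isZero hY)
  exact hU.mem_of_iso h1.isoZero.symm hU.zero_mem

lemma lev_down {U : Set D} (hU : IsPreaisle U) {k : ℤ} {Y : A}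
    (hY : Y ∈ hd.lev U k) : Y ∈ hd.lev U (k - 1) :=
  hU.mem_of_iso ((shiftFunctorAdd' D (-k) 1 (-(k-1)) (by ring)).app (hd.ι.obj Y)).symm
    (hU.shift hY)

section Cone

variable {Y Z : A} (f : Y ⟶ Z) {Q : D} {q : hd.ι.obj Z ⟶ Q} {r : Q ⟶ (hd.ι.obj Y)⟦(1:ℤ)⟧}

lemma cone_isZero (hT : Triangle.mk (hd.ι.map f) q r ∈ distTriang D)
    {m : ℤ} (h1 : m ≠ -1) (h0 : m ≠ 0) : IsZero (hd.H m Q) := by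
  letI := hd.seq
  haveI := hd.homological
  have E := hd.H0.homologySequence_exact₃ _ hT m (m+1) rfl
  refine E.isZero_of_both_zeros ?_ ?_
  · exact (hd.isZero_H_heart Z h0).eq_of_src _ _
  · exact (hd.isZero_H_heart Y (show m + 1 ≠ 0 by omega)).eq_of_tgt _ _

/-- `H^{-1}` of the cone of a heart morphism is its kernel. -/
noncomputable def coneHneg1Iso (hT : Triangle.mk (hd.ι.map f) q r ∈ distTriang D) :
    hd.H (-1) Q ≅ kernel f := by
  letI := hd.seq
  haveI := hd.homological
  have E3 := hd.H0.homologySequence_exact₃ _ hT (-1) 0 (by ring)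
  have E1 := hd.H0.homologySequence_exact₁ _ hT (-1) 0 (by ring)
  haveI : Mono (hd.H0.homologySequenceδ (Triangle.mk (hd.ι.map f) q r) (-1) 0 (by ring)) :=
    E3.mono_g ((hd.isZero_H_heart Z (by norm_num)).eq_of_src _ _)
  exact IsLimit.conePointUniqueUpToIso E1.fIsKernel (kernelIsKernel _) ≪≫
    kernel.mapIso (hd.Hmap 0 (hd.ι.map f)) f (hd.heartH Y) (hd.heartH Z)
      (hd.heartH_naturality f)

/-- `H^0` of the cone of a heart morphism is its cokernel. -/
noncomputable def coneH0Iso (hT : Triangle.mk (hd.ι.map f) q r ∈ distTriang D) :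
    hd.H 0 Q ≅ cokernel f := by
  letI := hd.seq
  haveI := hd.homological
  have E3 := hd.H0.homologySequence_exact₃ _ hT 0 1 rfl
  have E2 := hd.H0.homologySequence_exact₂ _ hT 0
  haveI : Epi ((hd.H0.shift (0:ℤ)).map (Triangle.mk (hd.ι.map f) q r).mor₂) :=
    E3.epi_f ((hd.isZero_H_heart Y one_ne_zero).eq_of_tgt _ _)
  exact (IsColimit.coconePointUniqueUpToIso (cokernelIsCokernel _) E2.gIsCokernel).symm ≪≫
    cokernel.mapIso (hd.Hmap 0 (hd.ι.map f)) f (hd.heartH Y) (hd.heartH Z)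
      (hd.heartH_naturality f)

end Cone

lemma KC {U : Set D} (hU : IsPreaisle U) (hdet : IsHomDet hd U) {Y Z : A} (f : Y ⟶ Z) (j : ℤ)
    (hY : Y ∈ hd.lev U (j - 1)) (hZ : Z ∈ hd.lev U j) :
    kernel f ∈ hd.lev U (j - 1) ∧ cokernel f ∈ hd.lev U j := by
  obtain ⟨Q, q, r, hT⟩ := Pretriangulated.distinguished_cocone_triangle (hd.ι.map f)
  have hT' := Pretriangulated.Triangle.shift_distinguished _ hT (-j)
  have hQ : Q⟦(-j : ℤ)⟧ ∈ U := by
    have hrot := Pretriangulated.rot_of_distTriang _ hT'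
    refine hU.ext _ hrot ?_ ?_
    · exact hZ
    · exact hU.mem_of_iso ((shiftFunctorAdd' D (-j) 1 (-(j-1)) (by ring)).app (hd.ι.obj Y)) hY
  have hallm := (hdet _).mp hQ
  constructor
  · exact hd.lev_mem_of_iso hU
      (hd.Hshift (-j) (j-1) (-1) (by ring) Q ≪≫ hd.coneHneg1Iso f hT) (hallm (j-1))
  · exact hd.lev_mem_of_iso hU
      (hd.Hshift (-j) j 0 (by ring) Q ≪≫ hd.coneH0Iso f hT) (hallm j)

lemma lev_narrow {U : Set D} (hU : IsPreaisle U) (hdet : IsHomDet hd U) :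
    NarrowCondition (fun k => hd.lev U k) := by
  intro k S hS h0 h1 h3 h4
  -- kernel of the first map
  have hka : kernel (S.map' 0 1) ∈ hd.lev U (k - 1) :=
    (hd.KC hU hdet (S.map' 0 1) k h0 h1).1
  -- kernel of the second map
  have hkg : kernel (S.map' 1 2) ∈ hd.lev U (k - 1) := by
    have hcm : cokernel (kernel.ι (S.map' 0 1)) ∈ hd.lev U (k - 1 - 1 + 1) := by
      have := (hd.KC hU hdet (kernel.ι (S.map' 0 1)) (k - 1)
        (hd.lev_down hU hka) h0).2
      rwa [show (k - 1 - 1 + 1 : ℤ) = k - 1 by ring]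
    rw [show (k - 1 - 1 + 1 : ℤ) = k - 1 by ring] at hcm
    refine hd.lev_mem_of_iso hU (cokerIsoKer (kernel.ι (S.map' 0 1)) (S.map' 0 1) (S.map' 1 2)
      (kernel.condition _) (hS.toIsComplex.zero 0)
      (ShortComplex.exact_of_f_is_kernel _ (kernelIsKernel _)) (hS.exact 0)) hcm
  -- cokernel of the second map
  have hcg : cokernel (S.map' 1 2) ∈ hd.lev U k := by
    have hke : kernel (S.map' 3 4) ∈ hd.lev U k := by
      have h3' : S.obj' 3 ∈ hd.lev U (k + 1 - 1) := by
        rwa [show (k + 1 - 1 : ℤ) = k by ring]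
      have := (hd.KC hU hdet (S.map' 3 4) (k + 1) h3' h4).1
      rwa [show (k + 1 - 1 : ℤ) = k by ring] at this
    exact hd.lev_mem_of_iso hU (cokerIsoKer (S.map' 1 2) (S.map' 2 3) (S.map' 3 4)
      (hS.toIsComplex.zero 1) (hS.toIsComplex.zero 2) (hS.exact 1) (hS.exact 2)).symm hke
  -- assemble the cone of the middle map
  obtain ⟨Q, q, r, hT⟩ := Pretriangulated.distinguished_cocone_triangle (hd.ι.map (S.map' 1 2))
  have hQ : Q⟦(-k : ℤ)⟧ ∈ U := by
    refine (hdet _).mpr fun m => ?_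
    by_cases hm1 : m = k - 1
    · subst hm1
      exact hd.lev_mem_of_iso hU
        (hd.Hshift (-k) (k-1) (-1) (by ring) Q ≪≫ hd.coneHneg1Iso (S.map' 1 2) hT).symm hkg
    · by_cases hm0 : m = k
      · rw [hm0]
        exact hd.lev_mem_of_iso hU
          (hd.Hshift (-k) k 0 (by ring) Q ≪≫ hd.coneH0Iso (S.map' 1 2) hT).symm hcg
      · refine hd.lev_zero hU ?_
        refine IsZero.of_iso ?_ (hd.Hshift (-k) m (-k + m) rfl Q)
        exact hd.cone_isZero (S.map' 1 2) hT (by omega) (by omega)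
  have hT' := Pretriangulated.Triangle.shift_distinguished _ hT (-k)
  exact hU.ext _ hT' h1 hQ

end HeartData


namespace HeartData

lemma theta_preaisle {C : ℤ → Set A} (hC : IsNarrowSequence C) :
    IsPreaisle (thetaSet hd C) := by
  constructor
  · intro X Y e hX k
    exact (hC.subcat k).mem_of_iso (hd.Hiso k e) (hX k)
  · intro k
    have hz : IsZero (hd.H k (0 : D)) := hd.isZero_H_of_isZero (isZero_zero D) k
    exact (hC.subcat k).mem_of_iso hz.isoZero.symm (hC.subcat k).zero_mem
  · intro T hT h₁ h₃ k
    letI := hd.seq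
    haveI := hd.homological
    have hEx : (ComposableArrows.mk₄ (hd.H0.homologySequenceδ T (k-1) k (by ring))
        ((hd.H0.shift k).map T.mor₁) ((hd.H0.shift k).map T.mor₂)
        (hd.H0.homologySequenceδ T k (k+1) rfl)).Exact :=
      ComposableArrows.exact_of_δ₀
        (hd.H0.homologySequence_exact₁ T hT (k-1) k (by ring)).exact_toComposableArrows
        (ComposableArrows.exact_of_δ₀
          (hd.H0.homologySequence_exact₂ T hT k).exact_toComposableArrows
          (hd.H0.homologySequence_exact₃ T hT k (k+1) rfl).exact_toComposableArrows)
    exact hC.narrow k _ hEx (h₃ (k-1)) (h₁ k) (h₃ k) (h₁ (k+1))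
  · intro X hX k
    exact (hC.subcat k).mem_of_iso (hd.Hshift 1 k (k+1) (by ring) X).symm
      (hC.decreasing k (hX (k+1)))

lemma heart_shift_mem_theta {C : ℤ → Set A} (hC : IsNarrowSequence C) {Y : A} {k : ℤ}
    (hY : Y ∈ C k) : (hd.ι.obj Y)⟦(-k)⟧ ∈ thetaSet hd C := by
  intro j
  by_cases hj : j = k
  · subst hj
    exact (hC.subcat j).mem_of_iso (hd.heartHshift Y j).symm hY
  · exact (hC.subcat j).mem_of_iso (hd.isZero_heartHshift Y hj).isoZero.symm
      (hC.subcat j).zero_mem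

lemma theta_homdet {C : ℤ → Set A} (hC : IsNarrowSequence C) :
    IsHomDet hd (thetaSet hd C) := by
  intro X
  constructor
  · intro hX k
    exact hd.heart_shift_mem_theta hC (hX k)
  · intro hall k
    have h2 : (hd.ι.obj (hd.H k X))⟦(-k)⟧ ∈ thetaSet hd C := hall k
    exact (hC.subcat k).mem_of_iso (hd.heartHshift (hd.H k X) k) (h2 k)

lemma HkSet_eq_lev {U : Set D} (hU : IsPreaisle U) (hdet : IsHomDet hd U) (k : ℤ) :
    HkSet hd U k = hd.lev U k := by
  ext Y
  constructor
  · rintro ⟨X, hX, ⟨e⟩⟩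
    exact hd.lev_mem_of_iso hU e.symm ((hdet X).mp hX k)
  · intro hY
    exact ⟨(hd.ι.obj Y)⟦(-k)⟧, hY, ⟨(hd.heartHshift Y k).symm⟩⟩

lemma mu_narrowSequence {U : Set D} (hU : IsPreaisle U) (hdet : IsHomDet hd U) :
    IsNarrowSequence (fun k => HkSet hd U k) := by
  have he : (fun k => HkSet hd U k) = fun k => hd.lev U k :=
    funext fun k => hd.HkSet_eq_lev hU hdet k
  rw [he]
  constructor
  · intro k
    constructor
    · intro X Y e hX
      exact hd.lev_mem_of_iso hU e hX
    · exact hd.lev_zero hU (isZero_zero A)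
    · intro X Y hX hY
      obtain ⟨h', hTr⟩ := (hd.shortExact_iff (ShortComplex.mk (biprod.inl : X ⟶ X ⊞ Y)
        (biprod.snd) biprod.inl_snd)).mp
        (ShortComplex.Splitting.ofHasBinaryBiproduct X Y).shortExact
      have hT' := Pretriangulated.Triangle.shift_distinguished _ hTr (-k)
      exact hU.ext _ hT' hX hY
  · intro k Y hY
    have h2 := hd.lev_down hU hY
    rwa [show (k + 1 - 1 : ℤ) = k by ring] at h2
  · exact hd.lev_narrow hU hdet

/-- The equivalence between narrow sequences and homology-determined preaisles. -/
noncomputable def narrowEquiv :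
    {C : ℤ → Set A // IsNarrowSequence C} ≃ {U : Set D // IsPreaisle U ∧ IsHomDet hd U} where
  toFun C := ⟨thetaSet hd C.1, hd.theta_preaisle C.2, hd.theta_homdet C.2⟩
  invFun U := ⟨fun k => HkSet hd U.1 k, hd.mu_narrowSequence U.2.1 U.2.2⟩
  left_inv C := by
    apply Subtype.ext
    funext k
    ext Y
    constructor
    · rintro ⟨X, hX, ⟨e⟩⟩
      exact (C.2.subcat k).mem_of_iso e.symm (hX k)
    · intro hY
      exact ⟨(hd.ι.obj Y)⟦(-k)⟧, hd.heart_shift_mem_theta C.2 hY, ⟨(hd.heartHshift Y k).symm⟩⟩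
  right_inv U := by
    apply Subtype.ext
    show thetaSet hd (fun k => HkSet hd U.1 k) = U.1
    ext X
    constructor
    · intro hX
      refine (U.2.2 X).mpr fun k => ?_
      have h2 : hd.H k X ∈ HkSet hd U.1 k := hX k
      rw [hd.HkSet_eq_lev U.2.1 U.2.2 k] at h2
      exact h2
    · intro hX k
      show hd.H k X ∈ HkSet hd U.1 k
      rw [hd.HkSet_eq_lev U.2.1 U.2.2 k]
      exact (U.2.2 X).mp hX k

end HeartData


/-- **Theorem (Stanley–van Roosmalen).** The maps `θ : C ↦ {X ∣ H^k X ∈ C(k) ∀k}` and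
`μ : U ↦ {H^k U}_{k∈ℤ}` are mutually inverse bijections between the set of narrow sequences
in the heart `H` and the set of homology-determined preaisles in `D`. -/
theorem narrowSequences_equiv_homDetPreaisles
    {D : Type*} [Category D] [Preadditive D] [HasZeroObject D] [HasShift D ℤ]
    [∀ n : ℤ, (shiftFunctor D n).Additive] [Pretriangulated D]
    {t : Triangulated.TStructure D} {A : Type*} [Category A] [Abelian A]
    (hd : HeartData t A) :
    ∃ e : {C : ℤ → Set A // IsNarrowSequence C} ≃
        {U : Set D // IsPreaisle U ∧ IsHomDet hd U},
      (∀ C, (e C).1 = thetaSet hd C.1) ∧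
        (∀ U, (e.symm U).1 = fun k => HkSet hd U.1 k) := by
  exact ⟨hd.narrowEquiv, fun C => rfl, fun U => rfl⟩

end ICEPaper
end

section
/- Let {C(k)}_{k∈ℤ} be a sequence of subcategories of an abelian category A. Then {C(k)}_{k∈ℤ} is a narrow sequence in A if and only if it is an ICE sequence in A. -/
open CategoryTheory Limits ZeroObject

namespace ICEPaper

variable {A : Type*} [Category A] [Abelian A]

/-! ### Auxiliary lemmas -/

section Aux

lemma exact_ker {X Y : A} (g : X ⟶ Y) :
    (ShortComplex.mk (kernel.ι g) g (kernel.condition g)).Exact :=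
  ShortComplex.exact_of_f_is_kernel _ (kernelIsKernel g)

lemma exact_coker {X Y : A} (f : X ⟶ Y) :
    (ShortComplex.mk f (cokernel.π f) (cokernel.condition f)).Exact :=
  ShortComplex.exact_of_g_is_cokernel _ (cokernelIsCokernel f)

lemma shortExact_of_epi {X Y : A} (g : X ⟶ Y) [Epi g] :
    (ShortComplex.mk (kernel.ι g) g (kernel.condition g)).ShortExact :=
  ⟨exact_ker g⟩

lemma exact_epi_zero {X Y Z : A} (g : X ⟶ Y) [Epi g] :
    (ShortComplex.mk g (0 : Y ⟶ Z) comp_zero).Exact :=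
  (ShortComplex.exact_iff_epi _ rfl).2 ‹_›

lemma exact_zero_mono {W X Y : A} (g : X ⟶ Y) [Mono g] :
    (ShortComplex.mk (0 : W ⟶ X) g zero_comp).Exact :=
  (ShortComplex.exact_iff_mono _ rfl).2 ‹_›

/-- The kernel of the first projection of a pullback is the kernel of `g`. -/
noncomputable def kernelFstIso {X Y Z : A} (f : X ⟶ Z) (g : Y ⟶ Z) :
    kernel (pullback.fst f g) ≅ kernel g := by
  refine IsLimit.conePointUniqueUpToIso (kernelIsKernel (pullback.fst f g))
    (KernelFork.IsLimit.ofι (pullback.lift 0 (kernel.ι g) (by simp)) (by simp [pullback.lift_fst])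
      (fun {T} t ht => kernel.lift g (t ≫ pullback.snd f g) ?_) (fun {T} t ht => ?_)
      (fun {T} t ht m hm => ?_))
  · rw [Category.assoc, ← pullback.condition, ← Category.assoc, ht, zero_comp]
  · apply pullback.hom_ext <;> simp [ht, pullback.lift_fst, pullback.lift_snd]
  · rw [← cancel_mono (kernel.ι g)]
    simpa [pullback.lift_snd] using congrArg (· ≫ pullback.snd f g) hm

/-- The kernel of the second projection of a pullback is the kernel of `f`. -/
noncomputable def kernelSndIso {X Y Z : A} (f : X ⟶ Z) (g : Y ⟶ Z) :
    kernel (pullback.snd f g) ≅ kernel f := by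
  refine IsLimit.conePointUniqueUpToIso (kernelIsKernel (pullback.snd f g))
    (KernelFork.IsLimit.ofι (pullback.lift (kernel.ι f) 0 (by simp)) (by simp [pullback.lift_snd])
      (fun {T} t ht => kernel.lift f (t ≫ pullback.fst f g) ?_) (fun {T} t ht => ?_)
      (fun {T} t ht m hm => ?_))
  · rw [Category.assoc, pullback.condition, ← Category.assoc, ht, zero_comp]
  · apply pullback.hom_ext <;> simp [ht, pullback.lift_fst, pullback.lift_snd]
  · rw [← cancel_mono (kernel.ι f)]
    simpa [pullback.lift_fst] using congrArg (· ≫ pullback.fst f g) hm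

lemma exact_mk₄ {X₀ X₁ X₂ X₃ X₄ : A} (f : X₀ ⟶ X₁) (g : X₁ ⟶ X₂) (h : X₂ ⟶ X₃) (i : X₃ ⟶ X₄)
    (w₁ : f ≫ g = 0) (w₂ : g ≫ h = 0) (w₃ : h ≫ i = 0)
    (e₁ : (ShortComplex.mk f g w₁).Exact) (e₂ : (ShortComplex.mk g h w₂).Exact)
    (e₃ : (ShortComplex.mk h i w₃).Exact) :
    (ComposableArrows.mk₄ f g h i).Exact := by
  have hc : (ComposableArrows.mk₄ f g h i).IsComplex := by
    refine ⟨fun j hj => ?_⟩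
    match j, hj with
    | 0, _ => exact w₁
    | 1, _ => exact w₂
    | 2, _ => exact w₃
  refine ⟨hc, fun j hj => ?_⟩
  match j, hj with
  | 0, _ => exact e₁
  | 1, _ => exact e₂
  | 2, _ => exact e₃

variable {C : ℤ → Set A}

lemma narrow_kernel (hN : IsNarrowSequence C) (k : ℤ) {X Y : A} (g : X ⟶ Y)
    (hX : X ∈ C k) (hY : Y ∈ C (k + 1)) : kernel g ∈ C k := by
  refine hN.narrow k (ComposableArrows.mk₄ (0 : (0 : A) ⟶ (0 : A)) 0 (kernel.ι g) g)
    (exact_mk₄ _ _ _ _ (by simp) (by simp) (kernel.condition g)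
      (ShortComplex.exact_of_isZero_X₂ _ (isZero_zero A)) (exact_zero_mono _) (exact_ker g))
    (hN.subcat (k - 1)).zero_mem (hN.subcat k).zero_mem hX hY

lemma narrow_dec (hN : IsNarrowSequence C) (k : ℤ) : C k ⊆ C (k - 1) := by
  have := hN.decreasing (k - 1)
  rwa [sub_add_cancel] at this

lemma narrow_coker (hN : IsNarrowSequence C) (k : ℤ) {X Y : A} (f : X ⟶ Y)
    (hX : X ∈ C k) (hY : Y ∈ C k) : cokernel f ∈ C k := by
  refine hN.narrow k
    (ComposableArrows.mk₄ f (cokernel.π f) (0 : cokernel f ⟶ (0 : A)) (0 : (0 : A) ⟶ (0 : A)))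
    (exact_mk₄ _ _ _ _ (cokernel.condition f) comp_zero (by simp)
      (exact_coker f) (exact_epi_zero _) (ShortComplex.exact_of_isZero_X₂ _ (isZero_zero A)))
    (narrow_dec hN k hX) hY (hN.subcat k).zero_mem (hN.subcat (k + 1)).zero_mem

lemma narrow_image (hN : IsNarrowSequence C) (k : ℤ) {X Y : A} (f : X ⟶ Y)
    (hX : X ∈ C k) (hY : Y ∈ C k) : image f ∈ C k := by
  have hker : kernel f ∈ C (k - 1) := by
    refine narrow_kernel hN (k - 1) f (narrow_dec hN k hX) ?_
    rw [sub_add_cancel]; exact hY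
  have w : kernel.ι f ≫ factorThruImage f = 0 := by
    rw [← cancel_mono (image.ι f)]
    simp
  have e₁ : (ShortComplex.mk (kernel.ι f) (factorThruImage f) w).Exact := by
    refine (ShortComplex.exact_iff_of_epi_of_isIso_of_mono
      ({ τ₁ := 𝟙 _, τ₂ := 𝟙 _, τ₃ := image.ι f, comm₁₂ := by simp, comm₂₃ := by simp } :
        ShortComplex.mk (kernel.ι f) (factorThruImage f) w ⟶
          ShortComplex.mk (kernel.ι f) f (kernel.condition f))).2 (exact_ker f)
  refine hN.narrow k
    (ComposableArrows.mk₄ (kernel.ι f) (factorThruImage f) (0 : image f ⟶ (0 : A))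
      (0 : (0 : A) ⟶ (0 : A)))
    (exact_mk₄ _ _ _ _ w comp_zero (by simp)
      e₁ (exact_epi_zero _) (ShortComplex.exact_of_isZero_X₂ _ (isZero_zero A)))
    hker hX (hN.subcat k).zero_mem (hN.subcat (k + 1)).zero_mem

lemma narrow_ext (hN : IsNarrowSequence C) (k : ℤ) : ClosedUnderExtensions (C k) := by
  intro S hS h1 h3
  have := hS.mono_f
  have := hS.epi_g
  exact hN.narrow k
    (ComposableArrows.mk₄ (0 : (0 : A) ⟶ S.X₁) S.f S.g (0 : S.X₃ ⟶ (0 : A)))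
    (exact_mk₄ _ _ _ _ zero_comp S.zero comp_zero
      (exact_zero_mono _) hS.exact (exact_epi_zero _))
    (hN.subcat (k - 1)).zero_mem h1 h3 (hN.subcat (k + 1)).zero_mem

/-- A narrow sequence is an ICE sequence. -/
lemma isICESequence_of_isNarrowSequence (hN : IsNarrowSequence C) : IsICESequence C := by
  refine ⟨fun k => ⟨hN.subcat k, fun X Y f hX hY => narrow_image hN k f hX hY,
      fun X Y f hX hY => narrow_coker hN k f hX hY, narrow_ext hN k⟩,
    fun k => ⟨?_, hN.subcat (k + 1), ?_, ?_⟩⟩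
  · intro X hX
    exact ⟨hN.decreasing k hX, fun C' f hC' => narrow_kernel hN k f hC' hX⟩
  · intro S hS h1 h3
    have := hS.mono_f
    have := hS.epi_g
    refine hN.narrow (k + 1)
      (ComposableArrows.mk₄ (0 : (0 : A) ⟶ S.X₁) S.f S.g (0 : S.X₃ ⟶ (0 : A)))
      (exact_mk₄ _ _ _ _ zero_comp S.zero comp_zero
        (exact_zero_mono _) hS.exact (exact_epi_zero _))
      (hN.subcat (k + 1 - 1)).zero_mem h1 h3 (hN.subcat (k + 1 + 1)).zero_mem
  · intro X Y g hepi hX hYα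
    have hker : kernel g ∈ C k := hYα.2 g (hN.decreasing k hX)
    refine hN.narrow (k + 1)
      (ComposableArrows.mk₄ (kernel.ι g) g (0 : Y ⟶ (0 : A)) (0 : (0 : A) ⟶ (0 : A)))
      (exact_mk₄ _ _ _ _ (kernel.condition g) comp_zero (by simp)
        (exact_ker g) (exact_epi_zero _) (ShortComplex.exact_of_isZero_X₂ _ (isZero_zero A)))
      ?_ hX (hN.subcat (k + 1)).zero_mem (hN.subcat (k + 1 + 1)).zero_mem
    rw [add_sub_cancel_right]
    exact hker

lemma ice_coker (hI : IsICESequence C) (k : ℤ) {X B : A} (a : X ⟶ B)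
    (hX : X ∈ C (k - 1)) (hB : B ∈ C k) : cokernel a ∈ C k := by
  have e : C (k - 1 + 1) = C k := by rw [sub_add_cancel]
  have hsub : C k ⊆ alphaSub (C (k - 1)) := by
    have := (hI.tors (k - 1)).subset
    rwa [e] at this
  have hB1 : B ∈ C (k - 1) := (hsub hB).1
  have hQα : cokernel a ∈ alphaSub (C (k - 1)) := by
    refine ⟨(hI.ice (k - 1)).coker a hX hB1, fun C' f hC' => ?_⟩
    have him : image a ∈ C (k - 1) := (hI.ice (k - 1)).im a hX hB1
    have hkerπ : kernel (cokernel.π a) ∈ C (k - 1) :=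
      (hI.ice (k - 1)).subcat.mem_of_iso (Abelian.imageIsoImage a).symm him
    have hkfst : kernel (pullback.fst f (cokernel.π a)) ∈ C (k - 1) :=
      (hI.ice (k - 1)).subcat.mem_of_iso (kernelFstIso f (cokernel.π a)).symm hkerπ
    have hP : pullback f (cokernel.π a) ∈ C (k - 1) :=
      (hI.ice (k - 1)).ext _ (shortExact_of_epi (pullback.fst f (cokernel.π a))) hkfst hC'
    have hksnd : kernel (pullback.snd f (cokernel.π a)) ∈ C (k - 1) :=
      (hsub hB).2 (pullback.snd f (cokernel.π a)) hP
    exact (hI.ice (k - 1)).subcat.mem_of_iso (kernelSndIso f (cokernel.π a)) hksnd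
  have hq := (hI.tors (k - 1)).quot (cokernel.π a) inferInstance ?_ hQα
  · rwa [e] at hq
  · rw [e]; exact hB

lemma ice_narrow (hI : IsICESequence C) : NarrowCondition C := by
  intro k S hS h0 h1 h3 h4
  have za : S.map' 0 1 ≫ S.map' 1 2 = 0 := hS.toIsComplex.zero 0
  have zb : S.map' 1 2 ≫ S.map' 2 3 = 0 := hS.toIsComplex.zero 1
  have zc : S.map' 2 3 ≫ S.map' 3 4 = 0 := hS.toIsComplex.zero 2
  have hca : cokernel (S.map' 0 1) ∈ C k := ice_coker hI k _ h0 h1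
  have hkd : kernel (S.map' 3 4) ∈ C k := ((hI.tors k).subset h4).2 (S.map' 3 4) h3
  let f' : cokernel (S.map' 0 1) ⟶ S.obj' 2 := cokernel.desc _ (S.map' 1 2) za
  let g' : S.obj' 2 ⟶ kernel (S.map' 3 4) := kernel.lift _ (S.map' 2 3) zc
  have w1 : f' ≫ S.map' 2 3 = 0 := by
    rw [← cancel_epi (cokernel.π (S.map' 0 1))]
    simp [f', zb]
  have w' : f' ≫ g' = 0 := by
    rw [← cancel_mono (kernel.ι (S.map' 3 4))]
    simp [g', w1]
  have hmono : Mono f' := (ShortComplex.exact_iff_mono_cokernel_desc _).1 (hS.exact' 0 1 2)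
  have hepi : Epi g' := (ShortComplex.exact_iff_epi_kernel_lift _).1 (hS.exact' 2 3 4)
  have ex1 : (ShortComplex.mk f' (S.map' 2 3) w1).Exact := by
    refine (ShortComplex.exact_iff_of_epi_of_isIso_of_mono
      (ShortComplex.Hom.mk (cokernel.π _) (𝟙 _) (𝟙 _) ?_ ?_ :
        ShortComplex.mk (S.map' 1 2) (S.map' 2 3) zb ⟶ ShortComplex.mk f' (S.map' 2 3) w1)).1
      (hS.exact' 1 2 3)
    · simp [f']
    · simp
  have ex2 : (ShortComplex.mk f' g' w').Exact := by
    refine (ShortComplex.exact_iff_of_epi_of_isIso_of_mono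
      (ShortComplex.Hom.mk (𝟙 _) (𝟙 _) (kernel.ι _) ?_ ?_ :
        ShortComplex.mk f' g' w' ⟶ ShortComplex.mk f' (S.map' 2 3) w1)).2 ex1
    · simp
    · simp [g']
  exact (hI.ice k).ext _ (ShortComplex.ShortExact.mk' ex2 hmono hepi) hca hkd

/-- An ICE sequence is a narrow sequence. -/
lemma isNarrowSequence_of_isICESequence (hI : IsICESequence C) : IsNarrowSequence C :=
  ⟨fun k => (hI.ice k).subcat, fun k _ hX => ((hI.tors k).subset hX).1, ice_narrow hI⟩

end Aux

/-- **Proposition.** A sequence `{C(k)}_{k∈ℤ}` of subcategories of an abelian category `A`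
is a narrow sequence if and only if it is an ICE sequence. -/
theorem isNarrowSequence_iff_isICESequence {A : Type*} [Category A] [Abelian A]
    (C : ℤ → Set A) :
    IsNarrowSequence C ↔ IsICESequence C :=
  ⟨isICESequence_of_isNarrowSequence, isNarrowSequence_of_isICESequence⟩

end ICEPaper
end

section
/- There exist mutually inverse bijective correspondences between the set of ICE sequences in the heart H and the set of homology-determined preaisles in D, given by C = {C(k)}_{k∈ℤ} ↦ θ(C) = {X ∈ D | H^k X ∈ C(k) for all k ∈ ℤ} and U ↦ {H^k U}_{k∈ℤ}. -/
open CategoryTheory Limits ZeroObject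

namespace ICEPaper

open Pretriangulated Triangulated

variable {D : Type*} [Category D] [Preadditive D] [HasZeroObject D] [HasShift D ℤ]
  [∀ n : ℤ, (shiftFunctor D n).Additive] [Pretriangulated D]

variable (t : TStructure D)

variable {t} {A : Type*} [Category A] [Abelian A] (hd : HeartData t A)

/-! ### Auxiliary material for the proof -/

section AuxAbelian

variable {B : Type*} [Category B] [Abelian B]

lemma ICE_mem_of_isZero {C : Set B} (hC : IsSubcat C) {X : B} (hX : IsZero X) : X ∈ C :=
  hC.mem_of_iso hX.isoZero.symm hC.zero_mem

/-- If `(f, g)` is exact and `g` is epi, then `Z ≅ cokernel f`. -/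
noncomputable def ICE_cokernelDescIso {X Y Z : B} (f : X ⟶ Y) (g : Y ⟶ Z) (w : f ≫ g = 0)
    (hE : (ShortComplex.mk f g w).Exact) [Epi g] : cokernel f ≅ Z := by
  haveI : Mono (cokernel.desc f g w) :=
    (ShortComplex.exact_iff_mono_cokernel_desc (ShortComplex.mk f g w)).1 hE
  haveI : Epi (cokernel.desc f g w) := epi_of_epi_fac (cokernel.π_desc f g w)
  haveI : IsIso (cokernel.desc f g w) := isIso_of_mono_of_epi _
  exact asIso (cokernel.desc f g w)

/-- If `(f, g)` is exact and `f` is mono, then `X ≅ kernel g`. -/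
noncomputable def ICE_kernelLiftIso {X Y Z : B} (f : X ⟶ Y) (g : Y ⟶ Z) (w : f ≫ g = 0)
    (hE : (ShortComplex.mk f g w).Exact) [Mono f] : X ≅ kernel g := by
  haveI : Epi (kernel.lift g f w) :=
    (ShortComplex.exact_iff_epi_kernel_lift (ShortComplex.mk f g w)).1 hE
  haveI : Mono (kernel.lift g f w) := mono_of_mono_fac (kernel.lift_ι g f w)
  haveI : IsIso (kernel.lift g f w) := isIso_of_mono_of_epi _
  exact asIso (kernel.lift g f w)

/-- For a sequence exact at two consecutive spots, `cokernel a ≅ kernel c`. -/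
noncomputable def ICE_cokerIsoKer {A₀ A₁ A₂ A₃ : B} (a : A₀ ⟶ A₁) (b : A₁ ⟶ A₂) (c : A₂ ⟶ A₃)
    (hab : a ≫ b = 0) (hbc : b ≫ c = 0)
    (e1 : (ShortComplex.mk a b hab).Exact) (e2 : (ShortComplex.mk b c hbc).Exact) :
    cokernel a ≅ kernel c := by
  have hl : a ≫ kernel.lift c b hbc = 0 := by
    rw [← cancel_mono (kernel.ι c), Category.assoc, kernel.lift_ι, zero_comp, hab]
  haveI : Epi (kernel.lift c b hbc) :=
    (ShortComplex.exact_iff_epi_kernel_lift (ShortComplex.mk b c hbc)).1 e2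
  have hex : (ShortComplex.mk a (kernel.lift c b hbc) hl).Exact := by
    let φ : ShortComplex.mk a (kernel.lift c b hbc) hl ⟶ ShortComplex.mk a b hab :=
      { τ₁ := 𝟙 _, τ₂ := 𝟙 _, τ₃ := kernel.ι c }
    haveI : Epi φ.τ₁ := by dsimp only [φ]; infer_instance
    haveI : IsIso φ.τ₂ := by dsimp only [φ]; infer_instance
    haveI : Mono φ.τ₃ := by dsimp only [φ]; infer_instance
    exact (ShortComplex.exact_iff_of_epi_of_isIso_of_mono φ).2 e1
  exact ICE_cokernelDescIso a (kernel.lift c b hbc) hl hex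

/-- The kernel of the first projection of a pullback. -/
noncomputable def ICE_kernelFstIso {X Y Z : B} (f : X ⟶ Z) (g : Y ⟶ Z) :
    kernel (pullback.fst f g) ≅ kernel g where
  hom := kernel.lift g (kernel.ι _ ≫ pullback.snd f g) (by
    rw [Category.assoc, ← pullback.condition, ← Category.assoc, kernel.condition, zero_comp])
  inv := kernel.lift _ (pullback.lift 0 (kernel.ι g) (by simp)) (by rw [pullback.lift_fst])
  hom_inv_id := by
    rw [← cancel_mono (kernel.ι (pullback.fst f g))]
    simp only [Category.assoc, kernel.lift_ι, Category.id_comp]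
    apply pullback.hom_ext <;> simp [kernel.condition, pullback.lift_fst, pullback.lift_snd]
  inv_hom_id := by
    rw [← cancel_mono (kernel.ι g)]
    simp [pullback.lift_fst, pullback.lift_snd]

/-- The kernel of the second projection of a pullback. -/
noncomputable def ICE_kernelSndIso {X Y Z : B} (f : X ⟶ Z) (g : Y ⟶ Z) :
    kernel (pullback.snd f g) ≅ kernel f where
  hom := kernel.lift f (kernel.ι _ ≫ pullback.fst f g) (by
    rw [Category.assoc, pullback.condition, ← Category.assoc, kernel.condition, zero_comp])
  inv := kernel.lift _ (pullback.lift (kernel.ι f) 0 (by simp)) (by rw [pullback.lift_snd])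
  hom_inv_id := by
    rw [← cancel_mono (kernel.ι (pullback.snd f g))]
    simp only [Category.assoc, kernel.lift_ι, Category.id_comp]
    apply pullback.hom_ext <;> simp [kernel.condition, pullback.lift_fst, pullback.lift_snd]
  inv_hom_id := by
    rw [← cancel_mono (kernel.ι f)]
    simp [pullback.lift_fst, pullback.lift_snd]

/-- The key abelian lemma: ICE sequences satisfy the narrow condition. -/
lemma ICE_lemmaN {C : ℤ → Set B} (hC : IsICESequence C) (k : ℤ)
    {A₀ A₁ A₂ A₃ A₄ : B} {a : A₀ ⟶ A₁} {b : A₁ ⟶ A₂} {c : A₂ ⟶ A₃} {d : A₃ ⟶ A₄}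
    {hab : a ≫ b = 0} {hbc : b ≫ c = 0} {hcd : c ≫ d = 0}
    (e1 : (ShortComplex.mk a b hab).Exact) (e2 : (ShortComplex.mk b c hbc).Exact)
    (e3 : (ShortComplex.mk c d hcd).Exact)
    (m0 : A₀ ∈ C (k - 1)) (m1 : A₁ ∈ C k) (m3 : A₃ ∈ C k) (m4 : A₄ ∈ C (k + 1)) :
    A₂ ∈ C k := by
  have t1 := hC.tors (k - 1)
  rw [sub_add_cancel] at t1
  have t2 := hC.tors k
  have hk1 := hC.ice (k - 1)
  have hk := hC.ice k
  have sub1 : A₁ ∈ C (k - 1) := (t1.subset m1).1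
  -- `cokernel a` lies in `αC(k-1)`
  have mQ : cokernel a ∈ alphaSub (C (k - 1)) := by
    refine ⟨hk1.coker a m0 sub1, ?_⟩
    intro W u hW
    have hker1 : kernel (pullback.fst u (cokernel.π a)) ∈ C (k - 1) :=
      hk1.subcat.mem_of_iso
        (ICE_kernelFstIso u (cokernel.π a) ≪≫ Abelian.imageIsoImage a).symm
        (hk1.im a m0 sub1)
    have hS : (ShortComplex.mk (kernel.ι (pullback.fst u (cokernel.π a)))
        (pullback.fst u (cokernel.π a)) (kernel.condition _)).ShortExact :=
      { exact := (ShortComplex.mk (kernel.ι (pullback.fst u (cokernel.π a)))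
          (pullback.fst u (cokernel.π a)) (kernel.condition _)).exact_of_f_is_kernel
          (kernelIsKernel _) }
    have hP : pullback u (cokernel.π a) ∈ C (k - 1) := hk1.ext _ hS hker1 hW
    have hks : kernel (pullback.snd u (cokernel.π a)) ∈ C (k - 1) :=
      (t1.subset m1).2 (pullback.snd u (cokernel.π a)) hP
    exact hk1.subcat.mem_of_iso (ICE_kernelSndIso u (cokernel.π a)) hks
  have mQk : cokernel a ∈ C k := t1.quot (cokernel.π a) inferInstance m1 mQ
  have mKerd : kernel d ∈ C k := (t2.subset m4).2 d m3
  have i1 : cokernel a ≅ kernel c := ICE_cokerIsoKer a b c hab hbc e1 e2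
  have i2 : cokernel b ≅ kernel d := ICE_cokerIsoKer b c d hbc hcd e2 e3
  have hz : kernel.ι c ≫ cokernel.π b = 0 :=
    ((ShortComplex.mk b c hbc).exact_iff_kernel_ι_comp_cokernel_π_zero).1 e2
  have hz2 : kernel.ι (cokernel.π b) ≫ cokernel.π (kernel.ι c) = 0 := by
    rw [← cancel_epi (Abelian.factorThruImage b), comp_zero, ← Category.assoc,
      show Abelian.factorThruImage b ≫ kernel.ι (cokernel.π b) = b from Abelian.image.fac b,
      ← kernel.lift_ι c b hbc, Category.assoc, cokernel.condition, comp_zero]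
  have hS2 : (ShortComplex.mk (kernel.ι c) (cokernel.π b) hz).ShortExact :=
    { exact := ((ShortComplex.mk (kernel.ι c) (cokernel.π b)
        hz).exact_iff_kernel_ι_comp_cokernel_π_zero).2 hz2 }
  exact hk.ext _ hS2 (hk.subcat.mem_of_iso i1 mQk) (hk.subcat.mem_of_iso i2.symm mKerd)

end AuxAbelian

section AuxTriangulated

/-- Composition of shifts. -/
noncomputable def ICE_shiftShiftIso (X : D) (a b c : ℤ) (h : a + b = c) : X⟦a⟧⟦b⟧ ≅ X⟦c⟧ :=
  (shiftFunctorAdd' D a b c h).symm.app X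

/-- `X⟦-k⟧⟦k⟧ ≅ X`. -/
noncomputable def ICE_shiftNegShift (X : D) (k : ℤ) : X⟦-k⟧⟦k⟧ ≅ X :=
  ICE_shiftShiftIso X (-k) k 0 (by ring) ≪≫ (shiftFunctorZero D ℤ).app X

/-- Commuting two shifts. -/
noncomputable def ICE_shiftCommIso (X : D) (a b : ℤ) : X⟦a⟧⟦b⟧ ≅ X⟦b⟧⟦a⟧ :=
  ICE_shiftShiftIso X a b (a + b) rfl ≪≫ (ICE_shiftShiftIso X b a (a + b) (by ring)).symm

lemma ICE_vanishHeart (Y : A) (j : ℤ) (hj : j ≠ 0) :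
    IsZero (hd.H0.obj ((hd.ι.obj Y)⟦j⟧)) := by
  rcases lt_or_gt_of_ne hj with hlt | hgt
  · exact hd.GE_vanish _ 0 j (hd.mem_heart Y).2 hlt
  · exact hd.LE_vanish _ 0 j (hd.mem_heart Y).1 hgt

/-- `H⁰(ιY⟦0⟧) ≅ Y`. -/
noncomputable def ICE_H0Heart (Y : A) : hd.H0.obj ((hd.ι.obj Y)⟦(0 : ℤ)⟧) ≅ Y :=
  hd.H0.mapIso ((shiftFunctorZero D ℤ).app _) ≪≫ hd.heartIso.app Y

lemma ICE_preaisle_shift_ext {U : Set D} (hU : IsPreaisle U) {T : Triangle D}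
    (hT : T ∈ distTriang D) (n : ℤ) (h1 : T.obj₁⟦n⟧ ∈ U) (h3 : T.obj₃⟦n⟧ ∈ U) :
    T.obj₂⟦n⟧ ∈ U :=
  hU.ext _ (Pretriangulated.Triangle.shift_distinguished T hT n) h1 h3

lemma ICE_tri_rot_ext {U : Set D} (hU : IsPreaisle U) {T : Triangle D}
    (hT : T ∈ distTriang D) (n : ℤ) (h1 : T.obj₂⟦n⟧ ∈ U) (h3 : T.obj₁⟦(1 : ℤ)⟧⟦n⟧ ∈ U) :
    T.obj₃⟦n⟧ ∈ U :=
  ICE_preaisle_shift_ext hU (rot_of_distTriang _ hT) n h1 h3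

lemma ICE_ses_ext {U : Set D} (hU : IsPreaisle U) (S : ShortComplex A) (hS : S.ShortExact)
    (n : ℤ) (h1 : (hd.ι.obj S.X₁)⟦n⟧ ∈ U) (h3 : (hd.ι.obj S.X₃)⟦n⟧ ∈ U) :
    (hd.ι.obj S.X₂)⟦n⟧ ∈ U := by
  obtain ⟨h, hT⟩ := (hd.shortExact_iff S).1 hS
  exact ICE_preaisle_shift_ext hU hT n h1 h3

lemma ICE_ses_rot_ext {U : Set D} (hU : IsPreaisle U) (S : ShortComplex A) (hS : S.ShortExact)
    (n : ℤ) (h1 : (hd.ι.obj S.X₂)⟦n⟧ ∈ U) (h3 : (hd.ι.obj S.X₁)⟦(1 : ℤ)⟧⟦n⟧ ∈ U) :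
    (hd.ι.obj S.X₃)⟦n⟧ ∈ U := by
  obtain ⟨h, hT⟩ := (hd.shortExact_iff S).1 hS
  exact ICE_tri_rot_ext hU hT n h1 h3

/-- The cone of a heart morphism, with the identification of its two cohomologies. -/
lemma ICE_cone_exists {Y₁ Y₂ : A} (f : Y₁ ⟶ Y₂) :
    ∃ (W : D) (g : hd.ι.obj Y₂ ⟶ W) (h : W ⟶ (hd.ι.obj Y₁)⟦(1 : ℤ)⟧),
      (Triangle.mk (hd.ι.map f) g h ∈ distTriang D) ∧
      Nonempty (hd.H0.obj W ≅ cokernel f) ∧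
      Nonempty (hd.H0.obj (W⟦(-1 : ℤ)⟧) ≅ kernel f) := by
  haveI := hd.homological
  obtain ⟨W, g, h, hT⟩ := Pretriangulated.distinguished_cocone_triangle (hd.ι.map f)
  set T := Triangle.mk (hd.ι.map f) g h with hTdef
  have e2 := hd.H0.map_distinguished_exact T hT
  have e3 := hd.H0.map_distinguished_exact _ (rot_of_distTriang _ hT)
  have e1 := hd.H0.map_distinguished_exact _ (inv_rot_of_distTriang _ hT)
  have e0 := hd.H0.map_distinguished_exact _
    (inv_rot_of_distTriang _ (inv_rot_of_distTriang _ hT))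
  have hz3 : hd.H0.map T.rotate.mor₂ = 0 :=
    (ICE_vanishHeart hd Y₁ 1 one_ne_zero).eq_of_tgt _ _
  haveI hepi : Epi (hd.H0.map T.mor₂) := e3.epi_f hz3
  have hz0 : hd.H0.map T.invRotate.invRotate.mor₁ = 0 :=
    (ICE_vanishHeart hd Y₂ (-1) (by decide)).eq_of_src _ _
  haveI hm : Mono (hd.H0.map T.invRotate.mor₁) := e0.mono_g hz0
  have natw : hd.H0.map (hd.ι.map f) ≫ (hd.heartIso.app Y₂).hom
      = (hd.heartIso.app Y₁).hom ≫ f := by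
    simpa using hd.heartIso.hom.naturality f
  refine ⟨W, g, h, hT, ⟨?_⟩, ⟨?_⟩⟩
  · exact (ICE_cokernelDescIso (hd.H0.map T.mor₁) (hd.H0.map T.mor₂)
      ((shortComplexOfDistTriangle T hT).map hd.H0).zero e2).symm ≪≫
      cokernel.mapIso _ f (hd.heartIso.app Y₁) (hd.heartIso.app Y₂) natw
  · exact (ICE_kernelLiftIso (hd.H0.map T.invRotate.mor₁) (hd.H0.map T.invRotate.mor₂)
      ((shortComplexOfDistTriangle T.invRotate (inv_rot_of_distTriang _ hT)).map hd.H0).zero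
      e1) ≪≫ kernel.mapIso _ f (hd.heartIso.app Y₁) (hd.heartIso.app Y₂) natw

end AuxTriangulated

section AuxMain

lemma ICE_hdet_mem {U : Set D} (hdet : IsHomDet hd U) {X : D} (hX : X ∈ U) (j : ℤ) :
    (hd.ι.obj (hd.H0.obj (X⟦j⟧)))⟦-j⟧ ∈ U := (hdet X).1 hX j

lemma ICE_fwdPreaisle {C : ℤ → Set A} (hC : IsICESequence C) :
    IsPreaisle (thetaSet hd C) := by
  haveI := hd.homological
  refine ⟨?_, ?_, ?_, ?_⟩
  · intro X Y e hX k
    exact (hC.ice k).subcat.mem_of_iso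
      (hd.H0.mapIso ((shiftFunctor D k).mapIso e)) (hX k)
  · intro k
    exact ICE_mem_of_isZero (hC.ice k).subcat
      (IsZero.of_iso (isZero_zero A)
        (hd.H0.mapIso ((shiftFunctor D k).mapZeroObject) ≪≫ hd.H0.mapZeroObject))
  · intro T hT h1 h3 k
    have e2 := hd.H0.map_distinguished_exact _
      (Pretriangulated.Triangle.shift_distinguished T hT k)
    have e3 := hd.H0.map_distinguished_exact _
      (rot_of_distTriang _ (Pretriangulated.Triangle.shift_distinguished T hT k))
    have e1 := hd.H0.map_distinguished_exact _
      (inv_rot_of_distTriang _ (Pretriangulated.Triangle.shift_distinguished T hT k))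
    refine ICE_lemmaN hC k e1 e2 e3 ?_ (h1 k) (h3 k) ?_
    · exact (hC.ice (k - 1)).subcat.mem_of_iso
        (hd.H0.mapIso (ICE_shiftShiftIso T.obj₃ k (-1) (k - 1) (by ring)).symm) (h3 (k - 1))
    · exact (hC.ice (k + 1)).subcat.mem_of_iso
        (hd.H0.mapIso (ICE_shiftShiftIso T.obj₁ k 1 (k + 1) rfl).symm) (h1 (k + 1))
  · intro X hX k
    exact (hC.ice k).subcat.mem_of_iso
      (hd.H0.mapIso (ICE_shiftShiftIso X 1 k (k + 1) (by ring)).symm)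
      ((hC.tors k).subset (hX (k + 1))).1

lemma ICE_fwdHomDet {C : ℤ → Set A} (hC : ∀ k, IsSubcat (C k)) :
    IsHomDet hd (thetaSet hd C) := by
  intro X
  constructor
  · intro hX k
    intro j
    by_cases hj : j = k
    · subst hj
      exact (hC j).mem_of_iso
        (hd.H0.mapIso (ICE_shiftNegShift (hd.ι.obj (hd.H0.obj (X⟦j⟧))) j) ≪≫
          hd.heartIso.app _).symm (hX j)
    · exact ICE_mem_of_isZero (hC j)
        (IsZero.of_iso (ICE_vanishHeart hd _ (j - k) (sub_ne_zero.mpr hj))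
          (hd.H0.mapIso (ICE_shiftShiftIso _ (-k) j (j - k) (by ring))))
  · intro hX j
    exact (hC j).mem_of_iso
      (hd.H0.mapIso (ICE_shiftNegShift (hd.ι.obj (hd.H0.obj (X⟦j⟧))) j) ≪≫
        hd.heartIso.app _) (hX j j)

lemma ICE_roundL {C : ℤ → Set A} (hC : IsICESequence C) (k : ℤ) :
    HkSet hd (thetaSet hd C) k = C k := by
  ext Y
  constructor
  · rintro ⟨X, hX, ⟨e⟩⟩
    exact (hC.ice k).subcat.mem_of_iso e.symm (hX k)
  · intro hY
    refine ⟨(hd.ι.obj Y)⟦-k⟧, ?_, ⟨?_⟩⟩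
    · intro j
      by_cases hj : j = k
      · subst hj
        exact (hC.ice j).subcat.mem_of_iso
          (hd.H0.mapIso (ICE_shiftNegShift (hd.ι.obj Y) j) ≪≫ hd.heartIso.app Y).symm hY
      · exact ICE_mem_of_isZero (hC.ice j).subcat
          (IsZero.of_iso (ICE_vanishHeart hd Y (j - k) (sub_ne_zero.mpr hj))
            (hd.H0.mapIso (ICE_shiftShiftIso _ (-k) j (j - k) (by ring))))
    · exact (hd.H0.mapIso (ICE_shiftNegShift (hd.ι.obj Y) k) ≪≫ hd.heartIso.app Y).symm

lemma ICE_roundR {U : Set D} (hU : IsPreaisle U) (hdet : IsHomDet hd U) :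
    thetaSet hd (fun k => HkSet hd U k) = U := by
  ext X
  constructor
  · intro hX
    refine (hdet X).2 ?_
    intro k
    obtain ⟨X', hX', ⟨e⟩⟩ := hX k
    exact hU.mem_of_iso ((shiftFunctor D (-k)).mapIso (hd.ι.mapIso e.symm))
      (ICE_hdet_mem hd hdet hX' k)
  · intro hX k
    exact ⟨X, hX, ⟨Iso.refl _⟩⟩

/-! ### The backward direction -/

lemma ICE_bwd_subcat {U : Set D} (hU : IsPreaisle U) (k : ℤ) :
    IsSubcat {Y : A | (hd.ι.obj Y)⟦-k⟧ ∈ U} := by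
  haveI := hd.additive
  refine ⟨?_, ?_, ?_⟩
  · intro Y Y' e hY
    exact hU.mem_of_iso ((shiftFunctor D (-k)).mapIso (hd.ι.mapIso e)) hY
  · exact hU.mem_of_iso ((shiftFunctor D (-k)).mapIso hd.ι.mapZeroObject ≪≫
      (shiftFunctor D (-k)).mapZeroObject).symm hU.zero_mem
  · intro X Y hX hY
    exact ICE_ses_ext hd hU _ (ShortComplex.Splitting.ofHasBinaryBiproduct X Y).shortExact
      (-k) hX hY

lemma ICE_bwd_ext {U : Set D} (hU : IsPreaisle U) (k : ℤ) :
    ClosedUnderExtensions {Y : A | (hd.ι.obj Y)⟦-k⟧ ∈ U} :=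
  fun S hS h1 h3 => ICE_ses_ext hd hU S hS (-k) h1 h3

lemma ICE_cone_shift_mem {U : Set D} (hU : IsPreaisle U) {Y₁ Y₂ : A} {f : Y₁ ⟶ Y₂}
    {W : D} {g : hd.ι.obj Y₂ ⟶ W} {h : W ⟶ (hd.ι.obj Y₁)⟦(1 : ℤ)⟧}
    (hT : Triangle.mk (hd.ι.map f) g h ∈ distTriang D) (n : ℤ)
    (h2 : (hd.ι.obj Y₂)⟦n⟧ ∈ U) (h1 : (hd.ι.obj Y₁)⟦n + 1⟧ ∈ U) : W⟦n⟧ ∈ U := by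
  refine ICE_tri_rot_ext hU hT n h2 ?_
  exact hU.mem_of_iso (ICE_shiftShiftIso _ 1 n (n + 1) (by ring)).symm h1

lemma ICE_bwd_coker {U : Set D} (hU : IsPreaisle U) (hdet : IsHomDet hd U) (k : ℤ) :
    ClosedUnderCokernels {Y : A | (hd.ι.obj Y)⟦-k⟧ ∈ U} := by
  intro Y₁ Y₂ f h1 h2
  obtain ⟨W, g, h, hT, ⟨cIso⟩, ⟨kIso⟩⟩ := ICE_cone_exists hd f
  have hW : W⟦(-k : ℤ)⟧ ∈ U := ICE_cone_shift_mem hd hU hT (-k) h2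
    (hU.mem_of_iso (ICE_shiftShiftIso _ (-k) 1 (-k + 1) rfl) (hU.shift h1))
  have hm := ICE_hdet_mem hd hdet hW k
  exact hU.mem_of_iso ((shiftFunctor D (-k)).mapIso
    (hd.ι.mapIso (hd.H0.mapIso (ICE_shiftNegShift W k) ≪≫ cIso))) hm

lemma ICE_bwd_ker {U : Set D} (hU : IsPreaisle U) (hdet : IsHomDet hd U) {Y₁ Y₂ : A}
    (f : Y₁ ⟶ Y₂) (n : ℤ) (h1 : (hd.ι.obj Y₁)⟦n + 1⟧ ∈ U) (h2 : (hd.ι.obj Y₂)⟦n⟧ ∈ U) :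
    (hd.ι.obj (kernel f))⟦n + 1⟧ ∈ U := by
  obtain ⟨W, g, h, hT, ⟨cIso⟩, ⟨kIso⟩⟩ := ICE_cone_exists hd f
  have hW : W⟦n⟧ ∈ U := ICE_cone_shift_mem hd hU hT n h2 h1
  have hm := ICE_hdet_mem hd hdet hW (-1 - n)
  have e : hd.H0.obj ((W⟦n⟧)⟦-1 - n⟧) ≅ kernel f :=
    hd.H0.mapIso (ICE_shiftShiftIso W n (-1 - n) (-1) (by ring)) ≪≫ kIso
  have hmem := hU.mem_of_iso ((shiftFunctor D (-(-1 - n))).mapIso (hd.ι.mapIso e)) hm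
  rw [show -(-1 - n) = n + 1 by ring] at hmem
  exact hmem

lemma ICE_bwd_im {U : Set D} (hU : IsPreaisle U) (hdet : IsHomDet hd U) (k : ℤ) :
    ClosedUnderImages {Y : A | (hd.ι.obj Y)⟦-k⟧ ∈ U} := by
  intro Y₁ Y₂ f h1 h2
  have hker : (hd.ι.obj (kernel f))⟦-k + 1⟧ ∈ U :=
    ICE_bwd_ker hd hU hdet f (-k)
      (hU.mem_of_iso (ICE_shiftShiftIso _ (-k) 1 (-k + 1) rfl) (hU.shift h1)) h2
  have wf : kernel.ι f ≫ Abelian.factorThruImage f = 0 := by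
    rw [← cancel_mono (Abelian.image.ι f), Category.assoc, Abelian.image.fac,
      kernel.condition, zero_comp]
  have ex0 : (ShortComplex.mk (kernel.ι f) f (kernel.condition f)).Exact :=
    (ShortComplex.mk (kernel.ι f) f (kernel.condition f)).exact_of_f_is_kernel
      (kernelIsKernel f)
  have hS : (ShortComplex.mk (kernel.ι f) (Abelian.factorThruImage f) wf).ShortExact := by
    let φ : ShortComplex.mk (kernel.ι f) (Abelian.factorThruImage f) wf ⟶
        ShortComplex.mk (kernel.ι f) f (kernel.condition f) :=
      { τ₁ := 𝟙 _, τ₂ := 𝟙 _, τ₃ := Abelian.image.ι f,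
        comm₂₃ := by simp [Abelian.image.fac] }
    haveI : Epi φ.τ₁ := by dsimp only [φ]; infer_instance
    haveI : IsIso φ.τ₂ := by dsimp only [φ]; infer_instance
    haveI : Mono φ.τ₃ := by dsimp only [φ]; infer_instance
    exact { exact := (ShortComplex.exact_iff_of_epi_of_isIso_of_mono φ).2 ex0 }
  have him : (hd.ι.obj (Abelian.image f))⟦-k⟧ ∈ U := by
    refine ICE_ses_rot_ext hd hU _ hS (-k) h1 ?_
    exact hU.mem_of_iso (ICE_shiftShiftIso _ 1 (-k) (-k + 1) (by ring)).symm hker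
  exact hU.mem_of_iso ((shiftFunctor D (-k)).mapIso
    (hd.ι.mapIso (Abelian.imageIsoImage f))) him

lemma ICE_bwd_tors {U : Set D} (hU : IsPreaisle U) (hdet : IsHomDet hd U) (k : ℤ) :
    IsTorsionClassIn (alphaSub {Y : A | (hd.ι.obj Y)⟦-k⟧ ∈ U})
      {Y : A | (hd.ι.obj Y)⟦-(k + 1)⟧ ∈ U} := by
  have toVk : ∀ {Y : A}, (hd.ι.obj Y)⟦-(k + 1)⟧ ∈ U → (hd.ι.obj Y)⟦-k⟧ ∈ U := by
    intro Y hY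
    exact hU.mem_of_iso (ICE_shiftShiftIso (hd.ι.obj Y) (-(k + 1)) 1 (-k) (by ring))
      (hU.shift hY)
  refine ⟨?_, ?_, ?_, ?_⟩
  · intro E hE
    refine ⟨toVk hE, ?_⟩
    intro X u hX
    have h1 : (hd.ι.obj X)⟦-(k + 1) + 1⟧ ∈ U := by
      rw [show -(k + 1) + 1 = -k by ring]; exact hX
    have := ICE_bwd_ker hd hU hdet u (-(k + 1)) h1 hE
    show (hd.ι.obj (kernel u))⟦-k⟧ ∈ U
    rw [show (-k : ℤ) = -(k + 1) + 1 by ring]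
    exact this
  · exact ICE_bwd_subcat hd hU (k + 1)
  · exact fun S hS a b => ICE_ses_ext hd hU S hS (-(k + 1)) a b
  · intro X Y f hf hX hY
    haveI := hf
    have hker : (hd.ι.obj (kernel f))⟦-k⟧ ∈ U := hY.2 f (toVk hX)
    have ex0 : (ShortComplex.mk (kernel.ι f) f (kernel.condition f)).Exact :=
      (ShortComplex.mk (kernel.ι f) f (kernel.condition f)).exact_of_f_is_kernel
        (kernelIsKernel f)
    have hS : (ShortComplex.mk (kernel.ι f) f (kernel.condition f)).ShortExact :=
      { exact := ex0 }
    refine ICE_ses_rot_ext hd hU _ hS (-(k + 1)) hX ?_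
    exact hU.mem_of_iso (ICE_shiftShiftIso _ 1 (-(k + 1)) (-k) (by ring)).symm hker

lemma ICE_bwdICE {U : Set D} (hU : IsPreaisle U) (hdet : IsHomDet hd U) :
    IsICESequence (fun k : ℤ => {Y : A | (hd.ι.obj Y)⟦-k⟧ ∈ U}) := by
  refine ⟨fun k => ⟨ICE_bwd_subcat hd hU k, ICE_bwd_im hd hU hdet k,
    ICE_bwd_coker hd hU hdet k, ICE_bwd_ext hd hU k⟩, fun k => ICE_bwd_tors hd hU hdet k⟩

lemma ICE_HkSet_eq {U : Set D} (hU : IsPreaisle U) (hdet : IsHomDet hd U) :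
    (fun k => HkSet hd U k) = (fun k : ℤ => {Y : A | (hd.ι.obj Y)⟦-k⟧ ∈ U}) := by
  funext k
  ext Y
  constructor
  · rintro ⟨X, hX, ⟨e⟩⟩
    exact hU.mem_of_iso ((shiftFunctor D (-k)).mapIso (hd.ι.mapIso e.symm))
      (ICE_hdet_mem hd hdet hX k)
  · intro hY
    exact ⟨(hd.ι.obj Y)⟦-k⟧, hY,
      ⟨(hd.H0.mapIso (ICE_shiftNegShift (hd.ι.obj Y) k) ≪≫ hd.heartIso.app Y).symm⟩⟩

end AuxMain

/-- **Theorem.** The maps `θ : C ↦ {X ∣ H^k X ∈ C(k) ∀k}` and `U ↦ {H^k U}_{k∈ℤ}` are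
mutually inverse bijections between the set of ICE sequences in the heart `H` and the set of
homology-determined preaisles in `D`. -/
theorem iceSequences_equiv_homDetPreaisles
    {D : Type*} [Category D] [Preadditive D] [HasZeroObject D] [HasShift D ℤ]
    [∀ n : ℤ, (shiftFunctor D n).Additive] [Pretriangulated D]
    {t : Triangulated.TStructure D} {A : Type*} [Category A] [Abelian A]
    (hd : HeartData t A) :
    ∃ e : {C : ℤ → Set A // IsICESequence C} ≃
        {U : Set D // IsPreaisle U ∧ IsHomDet hd U},
      (∀ C, (e C).1 = thetaSet hd C.1) ∧
        (∀ U, (e.symm U).1 = fun k => HkSet hd U.1 k) := by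
  refine ⟨{
      toFun := fun C => ⟨thetaSet hd C.1,
        ICE_fwdPreaisle hd C.2, ICE_fwdHomDet hd (fun k => (C.2.ice k).subcat)⟩
      invFun := fun U => ⟨fun k => HkSet hd U.1 k, by
        rw [ICE_HkSet_eq hd U.2.1 U.2.2]
        exact ICE_bwdICE hd U.2.1 U.2.2⟩
      left_inv := fun C => Subtype.ext (funext fun k => ICE_roundL hd C.2 k)
      right_inv := fun U => Subtype.ext (ICE_roundR hd U.2.1 U.2.2) },
    fun C => rfl, fun U => rfl⟩

end ICEPaper
end

section
/- Assume the t-structure (D^{≤0}, D^{≥1}) is bounded. Then a thick subcategory E of D is H^0-stable if and only if it is homology-determined. -/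
open CategoryTheory Limits ZeroObject

namespace ICEPaper

open Pretriangulated Triangulated

variable {D : Type*} [Category D] [Preadditive D] [HasZeroObject D] [HasShift D ℤ]
  [∀ n : ℤ, (shiftFunctor D n).Additive] [Pretriangulated D]

variable (t : TStructure D)

variable {t} {A : Type*} [Category A] [Abelian A] (hd : HeartData t A)

section AuxLemmas

lemma hom_zero_of_le_lt_ge {t : TStructure D} {X Y : D} (f : X ⟶ Y) {a b : ℤ}
    (ha : t.le a X) (hb : t.ge b Y) (hab : a < b) : f = 0 := by
  have h1 : t.le 0 (X⟦a⟧) := t.le_shift a a 0 (add_zero a) X ha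
  have h2 : t.ge 1 (Y⟦a⟧) := t.ge_shift (a + 1) a 1 rfl Y (t.ge_antitone (by omega) Y hb)
  have h3 := t.zero' ((shiftFunctor D a).map f) h1 h2
  apply (shiftFunctor D a).map_injective
  rw [h3, Functor.map_zero]

lemma ge_of_orth {t : TStructure D} {m : ℤ} {B : D}
    (h : ∀ W : D, t.le (m - 1) W → ∀ g : W ⟶ B, g = 0) : t.ge m B := by
  obtain ⟨X', Y', hX', hY', a, b, c, hT⟩ := t.exists_triangle B (m - 1) m (by omega)
  have ha : a = 0 := h X' hX' a
  subst ha
  obtain ⟨u, hu⟩ := Triangle.coyoneda_exact₁ _ hT (𝟙 (X'⟦(1 : ℤ)⟧))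
    (by exact (Category.id_comp _).trans (Functor.map_zero _ _ _))
  have hu0 : u = 0 :=
    hom_zero_of_le_lt_ge u (t.le_shift (m - 1) 1 (m - 2) (by omega) X' hX') hY' (by omega)
  have hz : IsZero (X'⟦(1 : ℤ)⟧) := by
    rw [IsZero.iff_id_eq_zero, hu, hu0, zero_comp]; rfl
  have hc : c = 0 := hz.eq_of_tgt _ _
  have : IsIso b :=
    (Triangle.isZero₁_iff_isIso₂ _ hT).1 ((Triangle.isZero₁_iff _ hT).2 ⟨rfl, hc⟩)
  exact ((t.ge m).prop_iff_of_iso (asIso b)).2 hY'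

lemma le_of_orth {t : TStructure D} {n : ℤ} {B : D}
    (h : ∀ W : D, t.ge (n + 1) W → ∀ g : B ⟶ W, g = 0) : t.le n B := by
  obtain ⟨X', Y', hX', hY', a, b, c, hT⟩ := t.exists_triangle B n (n + 1) rfl
  have hb : b = 0 := h Y' hY' b
  subst hb
  obtain ⟨u, hu⟩ := Triangle.yoneda_exact₃ _ hT (𝟙 Y') (by exact zero_comp)
  have hu0 : u = 0 :=
    hom_zero_of_le_lt_ge u (t.le_shift n 1 (n - 1) (by omega) X' hX') hY' (by omega)
  have hz : IsZero Y' := by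
    rw [IsZero.iff_id_eq_zero, hu, hu0, comp_zero]; rfl
  have : IsIso a := (Triangle.isZero₃_iff_isIso₁ _ hT).1 hz
  exact ((t.le n).prop_iff_of_iso (asIso a)).1 hX'

lemma ge_ext' {t : TStructure D} {m : ℤ} (T : Triangle D) (hT : T ∈ distTriang D)
    (h₁ : t.ge m T.obj₁) (h₃ : t.ge m T.obj₃) : t.ge m T.obj₂ := by
  refine ge_of_orth (fun W hW g => ?_)
  obtain ⟨u, hu⟩ := Triangle.coyoneda_exact₂ T hT g
    (hom_zero_of_le_lt_ge _ hW h₃ (by omega))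
  rw [hu, hom_zero_of_le_lt_ge u hW h₁ (by omega), zero_comp]

lemma le_ext' {t : TStructure D} {n : ℤ} (T : Triangle D) (hT : T ∈ distTriang D)
    (h₁ : t.le n T.obj₁) (h₃ : t.le n T.obj₃) : t.le n T.obj₂ := by
  refine le_of_orth (fun W hW g => ?_)
  obtain ⟨u, hu⟩ := Triangle.yoneda_exact₂ T hT g
    (hom_zero_of_le_lt_ge _ h₁ hW (by omega))
  rw [hu, hom_zero_of_le_lt_ge u h₃ hW (by omega), comp_zero]

lemma isIso_H_map_mor₂ (H : D ⥤ A) (hH : H.IsHomological) (T : Triangle D)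
    (hT : T ∈ distTriang D) (h1 : IsZero (H.obj T.obj₁))
    (h2 : IsZero (H.obj (T.obj₁⟦(1 : ℤ)⟧))) : IsIso (H.map T.mor₂) := by
  haveI := hH
  haveI : Mono (H.map T.mor₂) :=
    (H.map_distinguished_exact T hT).mono_g (h1.eq_of_src _ _)
  haveI : Epi (H.map T.mor₂) :=
    (H.map_distinguished_exact _ (rot_of_distTriang T hT)).epi_f (h2.eq_of_tgt _ _)
  exact isIso_of_mono_of_epi _

lemma isIso_H_map_mor₁ (H : D ⥤ A) (hH : H.IsHomological) (T : Triangle D)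
    (hT : T ∈ distTriang D) (h1 : IsZero (H.obj T.obj₃))
    (h2 : IsZero (H.obj (T.obj₃⟦(-1 : ℤ)⟧))) : IsIso (H.map T.mor₁) := by
  haveI := hH
  haveI : Mono (H.map T.mor₁) :=
    (H.map_distinguished_exact _ (inv_rot_of_distTriang T hT)).mono_g (h2.eq_of_src _ _)
  haveI : Epi (H.map T.mor₁) :=
    (H.map_distinguished_exact T hT).epi_f (h1.eq_of_tgt _ _)
  exact isIso_of_mono_of_epi _

lemma heart_realization (n : ℤ) (X : D) (h1 : t.le n X) (h2 : t.ge n X) :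
    Nonempty ((hd.ι.obj (hd.H n X))⟦(-n : ℤ)⟧ ≅ X) := by
  obtain ⟨Y, ⟨e⟩⟩ := hd.heart_mem (X⟦n⟧)
    ⟨t.le_shift n n 0 (add_zero n) X h1, t.ge_shift n n 0 (add_zero n) X h2⟩
  exact ⟨(shiftFunctor D (-n)).mapIso
      (hd.ι.mapIso ((hd.H0.mapIso e).symm ≪≫ hd.heartIso.app Y) ≪≫ e)
      ≪≫ ((shiftEquiv D n).unitIso.app X).symm⟩

lemma thick_mem_of_isZero {E : Set D} (hE : IsThick E) {X : D} (hX : IsZero X) : X ∈ E :=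
  hE.mem_of_iso hX.isoZero.symm hE.zero_mem

lemma mem_of_bounded_ind {E : Set D} (hE : IsThick E) :
    ∀ (j : ℕ) (n : ℤ) (X : D), t.le n X → t.ge (n + 1 - j) X →
      (∀ k : ℤ, (hd.ι.obj (hd.H k X))⟦(-k : ℤ)⟧ ∈ E) → X ∈ E := by
  intro j
  induction j with
  | zero =>
    intro n X h1 h2 _
    refine thick_mem_of_isZero hE ?_
    rw [IsZero.iff_id_eq_zero]
    exact hom_zero_of_le_lt_ge (𝟙 X) h1 (by simpa using h2) (by omega)
  | succ j ih =>
    intro n X h1 h2 hH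
    haveI := hd.homological
    obtain ⟨F, G, hF, hG, a, b, c, hT⟩ := t.exists_triangle X (n - 1) n (by omega)
    have h2' : t.ge (n - j) X := by
      have he : n + 1 - ((j + 1 : ℕ) : ℤ) = n - (j : ℤ) := by push_cast; ring
      rwa [he] at h2
    have hG_le : t.le n G := by
      refine le_ext' (t := t) (Triangle.mk a b c).rotate (rot_of_distTriang _ hT) h1 ?_
      exact t.le_monotone (show n - 2 ≤ n by omega) _
        (t.le_shift (n - 1) 1 (n - 2) (by omega) F hF)
    have hIso2 : IsIso (hd.H0.map
        (((Triangle.shiftFunctor D n).obj (Triangle.mk a b c)).mor₂)) := by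
      refine isIso_H_map_mor₂ hd.H0 hd.homological _
        (Triangle.shift_distinguished _ hT n) ?_ ?_
      · exact hd.LE_vanish F (n - 1) n hF (by omega)
      · exact (hd.LE_vanish F (n - 1) (n + 1) hF (by omega)).of_iso
          (hd.H0.mapIso (((shiftFunctorAdd' D n 1 (n + 1) rfl).app F).symm))
    have hG_mem : G ∈ E := by
      obtain ⟨eG⟩ := heart_realization hd n G hG_le hG
      exact hE.mem_of_iso ((shiftFunctor D (-n)).mapIso (hd.ι.mapIso
        (asIso (hd.H0.map (((Triangle.shiftFunctor D n).obj (Triangle.mk a b c)).mor₂))))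
        ≪≫ eG) (hH n)
    have hF_ge : t.ge (n - j) F := by
      refine ge_ext' (t := t) (Triangle.mk a b c).invRotate (inv_rot_of_distTriang _ hT) ?_ h2'
      exact t.ge_antitone (show (n : ℤ) - j ≤ n + 1 by omega) _
        (t.ge_shift n (-1) (n + 1) (by omega) G hG)
    have hF_H : ∀ k : ℤ, (hd.ι.obj (hd.H k F))⟦(-k : ℤ)⟧ ∈ E := by
      intro k
      by_cases hk : k < n
      · have hIso1 : IsIso (hd.H0.map
            (((Triangle.shiftFunctor D k).obj (Triangle.mk a b c)).mor₁)) := by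
          refine isIso_H_map_mor₁ hd.H0 hd.homological _
            (Triangle.shift_distinguished _ hT k) ?_ ?_
          · exact hd.GE_vanish G n k hG hk
          · exact (hd.GE_vanish G n (k - 1) hG (by omega)).of_iso
              (hd.H0.mapIso (((shiftFunctorAdd' D k (-1) (k - 1) (by ring)).app G).symm))
        exact hE.mem_of_iso ((shiftFunctor D (-k)).mapIso (hd.ι.mapIso
          (asIso (hd.H0.map
            (((Triangle.shiftFunctor D k).obj (Triangle.mk a b c)).mor₁))).symm)) (hH k)
      · have hz : IsZero (hd.H k F) := hd.LE_vanish F (n - 1) k hF (by omega)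
        refine thick_mem_of_isZero hE ?_
        haveI := hd.additive
        exact (shiftFunctor D (-k)).map_isZero (hd.ι.map_isZero hz)
    have hF_mem : F ∈ E := by
      refine ih (n - 1) F hF ?_ hF_H
      have he : n - 1 + 1 - (j : ℤ) = n - (j : ℤ) := by ring
      rwa [he]
    exact hE.ext _ hT hF_mem hG_mem

end AuxLemmas

/-- **Proposition.** Assume the t-structure is bounded. Then a thick subcategory `E` of `D`
is `H⁰`-stable if and only if it is homology-determined. -/
theorem h0Stable_iff_isHomDet_of_thick
    {D : Type*} [Category D] [Preadditive D] [HasZeroObject D] [HasShift D ℤ]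
    [∀ n : ℤ, (shiftFunctor D n).Additive] [Pretriangulated D]
    {t : Triangulated.TStructure D} {A : Type*} [Category A] [Abelian A]
    (hd : HeartData t A) (hbdd : BoundedT t) {E : Set D} (hE : IsThick E) :
    H0Stable hd E ↔ IsHomDet hd E := by
  constructor
  · intro hs X
    constructor
    · intro hX k
      show (hd.ι.obj (hd.H k X))⟦(-k : ℤ)⟧ ∈ E
      have hk : X⟦k⟧ ∈ E := hE.shift k hX
      have h0 : hd.ι.obj (hd.H 0 (X⟦k⟧)) ∈ E := hs _ hk
      have hmem : hd.ι.obj (hd.H k X) ∈ E :=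
        hE.mem_of_iso (hd.ι.mapIso (hd.H0.mapIso ((shiftFunctorZero D ℤ).app (X⟦k⟧)))) h0
      exact hE.shift (-k) hmem
    · intro hH
      obtain ⟨⟨n, hn⟩, ⟨m, hm⟩⟩ := hbdd X
      have hge : t.ge (n + 1 - ((n + 1 - m).toNat : ℤ)) X :=
        t.ge_antitone (by omega) X hm
      exact mem_of_bounded_ind hd hE (n + 1 - m).toNat n X hn hge (fun k => hH k)
  · intro hh X hX
    have h0 : (hd.ι.obj (hd.H 0 X))⟦(-(0 : ℤ))⟧ ∈ E := (hh X).1 hX 0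
    rw [neg_zero] at h0
    exact hE.mem_of_iso ((shiftFunctorZero D ℤ).app _) h0

end ICEPaper
end
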